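/- arXiv:1910.14629 — 13 statements merged into one kernel-verified Lean document; each statement's English description precedes it below -/
import Mathlib

section
/- For every irreducible element λ of R, the subsets Δ, C_λ and C^λ are subgroups of the abelian group C; moreover Δ ⊆ C_λ and Δ ⊆ C^λ; C_λ = C_{λ*} and C^λ = C^{λ*}; and C_λ ⊆ C^μ for every irreducible μ of R that is not a *-associate of λ. -/
open Classical in
/-- `S(λ)`: `λ` itself if `λ` is an associate of its involutive image `λ*`,
and `λ · λ*` otherwise. -/
noncomputable def Sdual {R : Type*} [CommRing R] (σ : R →+* R) (l : R) : R :=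
  if Associated l (σ l) then l else l * σ l

/-- `λ` and `μ` are `*`-associates: `λ` is an associate of `μ` or of `μ* = σ μ`. -/
def StarAssoc {R : Type*} [CommRing R] (σ : R →+* R) (l m : R) : Prop :=
  Associated l m ∨ Associated l (σ m)

/-- The subset `Δ ⊆ C` of classes of elements whose `χ`-value is a unit. -/
def DeltaSet {K C R : Type*} [AddCommMonoid K] [AddCommGroup C] [CommRing R]
    (π : K →+ C) (χ : K → R) : Set C :=
  {c | ∃ k, π k = c ∧ IsUnit (χ k)}

/-- The `λ`-primary part `C_λ ⊆ C`: classes of elements whose `χ`-value is an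
associate of a power of `S(λ)`. -/
def Cprim {K C R : Type*} [AddCommMonoid K] [AddCommGroup C] [CommRing R]
    (σ : R →+* R) (π : K →+ C) (χ : K → R) (l : R) : Set C :=
  {c | ∃ k, π k = c ∧ ∃ n : ℕ, Associated (χ k) (Sdual σ l ^ n)}

/-- The coprimary part `C^λ ⊆ C`: classes of elements whose `χ`-value is not
divisible by `λ`. -/
def Cco {K C R : Type*} [AddCommMonoid K] [AddCommGroup C] [CommRing R]
    (π : K →+ C) (χ : K → R) (l : R) : Set C :=
  {c | ∃ k, π k = c ∧ ¬ l ∣ χ k}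

theorem statement0
    {K C R : Type*} [AddCommMonoid K] [AddCommGroup C]
    [CommRing R] [IsDomain R] [UniqueFactorizationMonoid R]
    (π : K →+ C) (hπ : Function.Surjective π)
    (σ : R →+* R) (hσ : ∀ r, σ (σ r) = r)
    (χ : K → R) (hχ : ∀ k, χ k ≠ 0)
    (hD1 : ∀ k, Associated (σ (χ k)) (χ k))
    (hD2 : ∀ k k', Associated (χ (k + k')) (χ k * χ k'))
    (hD3 : ∀ k, ∃ j, π j = -π k ∧ Associated (χ j) (χ k))
    (l : R) (hl : Irreducible l) :
    (∃ H : AddSubgroup C, (H : Set C) = DeltaSet π χ) ∧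
    (∃ H : AddSubgroup C, (H : Set C) = Cprim σ π χ l) ∧
    (∃ H : AddSubgroup C, (H : Set C) = Cco π χ l) ∧
    DeltaSet π χ ⊆ Cprim σ π χ l ∧
    DeltaSet π χ ⊆ Cco π χ l ∧
    Cprim σ π χ l = Cprim σ π χ (σ l) ∧
    Cco π χ l = Cco π χ (σ l) ∧
    ∀ μ : R, Irreducible μ → ¬ StarAssoc σ l μ → Cprim σ π χ l ⊆ Cco π χ μ := by
  have hσunit : ∀ r : R, IsUnit (σ r) → IsUnit r := fun r h => by
    have h2 := h.map σ; rwa [hσ] at h2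
  have hprime : Prime l := UniqueFactorizationMonoid.irreducible_iff_prime.mp hl
  have hχ0 : IsUnit (χ 0) := by
    have h := hD2 0 0
    rw [add_zero] at h
    obtain ⟨u, hu⟩ := h
    have h2 : (u : R) = χ 0 := mul_left_cancel₀ (hχ 0) hu
    exact h2 ▸ u.isUnit
  have hσirr : ∀ m : R, Irreducible m → Irreducible (σ m) := by
    intro m hm
    refine ⟨fun h => hm.not_isUnit (hσunit m h), ?_⟩
    intro a b hab
    have h2 : m = σ a * σ b := by rw [← map_mul, ← hab, hσ]
    rcases hm.isUnit_or_isUnit h2 with h | h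
    · exact Or.inl (hσunit a h)
    · exact Or.inr (hσunit b h)
  have hdvd : ∀ (m : R) (k : K), σ m ∣ χ k ↔ m ∣ χ k := by
    intro m k
    constructor
    · intro h
      have h2 : σ (σ m) ∣ σ (χ k) := map_dvd σ h
      rw [hσ] at h2
      exact h2.trans (hD1 k).dvd
    · intro h
      exact (map_dvd σ h).trans (hD1 k).dvd
  have key : ∀ P : R → Prop,
      (∀ a b : R, Associated a b → P a → P b) →
      (∀ a : R, IsUnit a → P a) →
      (∀ a b : R, P a → P b → P (a * b)) →
      ∃ H : AddSubgroup C, (H : Set C) = {c | ∃ k, π k = c ∧ P (χ k)} := by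
    intro P hresp hunit hmul
    refine ⟨⟨⟨⟨_, ?_⟩, ?_⟩, ?_⟩, rfl⟩
    · rintro a b ⟨k, hk, hP⟩ ⟨k', hk', hP'⟩
      exact ⟨k + k', by rw [map_add, hk, hk'],
        hresp _ _ (hD2 k k').symm (hmul _ _ hP hP')⟩
    · exact ⟨0, map_zero π, hunit _ hχ0⟩
    · rintro a ⟨k, hk, hP⟩
      obtain ⟨j, hj, hjk⟩ := hD3 k
      exact ⟨j, by rw [hj, hk], hresp _ _ hjk.symm hP⟩
  have hSassoc : Associated (Sdual σ l) (Sdual σ (σ l)) := by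
    unfold Sdual
    rw [hσ]
    by_cases h : Associated l (σ l)
    · rw [if_pos h, if_pos h.symm]; exact h
    · rw [if_neg h, if_neg fun h2 => h h2.symm, mul_comm]
  have hCprim : ∀ m : R, Cprim σ π χ m =
      {c | ∃ k, π k = c ∧ ∃ n : ℕ, Associated (χ k) (Sdual σ m ^ n)} := fun _ => rfl
  have hprimSet : ∀ m : R, ∃ H : AddSubgroup C, (H : Set C) = Cprim σ π χ m := by
    intro m
    rw [hCprim]
    refine key (fun a => ∃ n : ℕ, Associated a (Sdual σ m ^ n)) ?_ ?_ ?_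
    · rintro a b hab ⟨n, h⟩; exact ⟨n, hab.symm.trans h⟩
    · intro a ha; exact ⟨0, by rw [pow_zero]; exact associated_one_iff_isUnit.mpr ha⟩
    · rintro a b ⟨n, h⟩ ⟨m', h'⟩
      exact ⟨n + m', by rw [pow_add]; exact h.mul_mul h'⟩
  have hcoSet : ∀ m : R, Irreducible m →
      ∃ H : AddSubgroup C, (H : Set C) = Cco π χ m := by
    intro m hm
    have hmp : Prime m := UniqueFactorizationMonoid.irreducible_iff_prime.mp hm
    refine key (fun a => ¬ m ∣ a) ?_ ?_ ?_
    · intro a b hab ha hdvdb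
      exact ha (hdvdb.trans hab.symm.dvd)
    · intro a ha h
      exact hm.not_isUnit (isUnit_of_dvd_unit h ha)
    · intro a b ha hb h
      rcases hmp.dvd_mul.mp h with h | h
      · exact ha h
      · exact hb h
  refine ⟨key _ (fun a b hab ha => hab.isUnit ha) (fun a ha => ha)
      (fun a b ha hb => ha.mul hb), hprimSet l, hcoSet l hl, ?_, ?_, ?_, ?_, ?_⟩
  · rintro c ⟨k, hk, hu⟩
    exact ⟨k, hk, 0, by rw [pow_zero]; exact associated_one_iff_isUnit.mpr hu⟩
  · rintro c ⟨k, hk, hu⟩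
    exact ⟨k, hk, fun h => hl.not_isUnit (isUnit_of_dvd_unit h hu)⟩
  · ext c
    constructor
    · rintro ⟨k, hk, n, h⟩
      exact ⟨k, hk, n, h.trans hSassoc.pow_pow⟩
    · rintro ⟨k, hk, n, h⟩
      exact ⟨k, hk, n, h.trans hSassoc.pow_pow.symm⟩
  · ext c
    constructor
    · rintro ⟨k, hk, h⟩
      exact ⟨k, hk, fun h2 => h ((hdvd l k).mp h2)⟩
    · rintro ⟨k, hk, h⟩
      exact ⟨k, hk, fun h2 => h ((hdvd l k).mpr h2)⟩
  · intro μ hμ hnot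
    rintro c ⟨k, hk, n, h⟩
    refine ⟨k, hk, fun hdvdμ => ?_⟩
    have hμp : Prime μ := UniqueFactorizationMonoid.irreducible_iff_prime.mp hμ
    have h1 : μ ∣ Sdual σ l ^ n := hdvdμ.trans h.dvd
    rcases Nat.eq_zero_or_pos n with hn | hn
    · subst hn
      rw [pow_zero] at h1
      exact hμ.not_isUnit (isUnit_of_dvd_one h1)
    · have h2 : μ ∣ Sdual σ l := hμp.dvd_of_dvd_pow h1
      unfold Sdual at h2
      by_cases hcase : Associated l (σ l)
      · rw [if_pos hcase] at h2
        exact hnot (Or.inl (hμ.associated_of_dvd hl h2).symm)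
      · rw [if_neg hcase] at h2
        rcases hμp.dvd_mul.mp h2 with h3 | h3
        · exact hnot (Or.inl (hμ.associated_of_dvd hl h3).symm)
        · have h4 : Associated μ (σ l) := hμ.associated_of_dvd (hσirr l hl) h3
          have h5 : Associated (σ μ) l := by
            simpa [hσ] using h4.map σ.toMonoidHom
          exact hnot (Or.inr h5.symm)
end

section
/- If Φ_L is surjective — that is, every c ∈ C can be written c = d + c_1 + … + c_n with d ∈ Δ and each c_i ∈ C_{λ_i} for some irreducibles λ_i of R — then Φ_R is surjective: for every c ∈ C and every irreducible λ of R there exists d ∈ C such that c − d ∈ C^λ and d ∈ C^μ for every irreducible μ of R that is not a *-associate of λ. -/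
section Helpers

variable {K C R : Type*} [AddCommMonoid K] [AddCommGroup C]
    [CommRing R] [IsDomain R] [UniqueFactorizationMonoid R]
    {π : K →+ C} {σ : R →+* R} {χ : K → R}

lemma sigma_assoc (σ : R →+* R) {a b : R} (h : Associated a b) :
    Associated (σ a) (σ b) :=
  associated_of_dvd_dvd (map_dvd σ h.dvd) (map_dvd σ h.symm.dvd)

lemma sigma_irreducible (hσ : ∀ r, σ (σ r) = r) {l : R} (hl : Irreducible l) :
    Irreducible (σ l) := by
  let e : R ≃* R :=
    { toFun := σ, invFun := σ, left_inv := hσ, right_inv := hσ, map_mul' := map_mul σ }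
  exact hl.map e

/-- `StarAssoc` transfers along a common element. -/
lemma starAssoc_trans (hσ : ∀ r, σ (σ r) = r) {l μ lam : R}
    (h1 : StarAssoc σ l lam) (h2 : StarAssoc σ μ lam) : StarAssoc σ l μ := by
  rcases h1 with h1 | h1 <;> rcases h2 with h2 | h2
  · exact Or.inl (h1.trans h2.symm)
  · right
    have := sigma_assoc σ h2
    rw [hσ] at this
    exact h1.trans this.symm
  · right
    exact h1.trans (sigma_assoc σ h2).symm
  · exact Or.inl (h1.trans h2.symm)

lemma chi_zero_isUnit (hχ : ∀ k : K, χ k ≠ 0)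
    (hD2 : ∀ k k', Associated (χ (k + k')) (χ k * χ k')) : IsUnit (χ (0 : K)) := by
  have h := hD2 0 0
  rw [add_zero] at h
  obtain ⟨u, hu⟩ := h
  have : χ (0 : K) * (u : R) = χ 0 * χ 0 := hu
  have h2 : (u : R) = χ 0 := mul_left_cancel₀ (hχ 0) this
  exact h2 ▸ u.isUnit

lemma zero_mem_cco (hχ : ∀ k : K, χ k ≠ 0)
    (hD2 : ∀ k k', Associated (χ (k + k')) (χ k * χ k'))
    {l : R} (hl : Irreducible l) : (0 : C) ∈ Cco π χ l := by
  refine ⟨0, map_zero π, fun hdvd => ?_⟩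
  exact hl.not_isUnit (isUnit_of_dvd_unit hdvd (chi_zero_isUnit hχ hD2))

lemma add_mem_cco (hD2 : ∀ k k', Associated (χ (k + k')) (χ k * χ k'))
    {l : R} (hl : Irreducible l) {a b : C}
    (ha : a ∈ Cco π χ l) (hb : b ∈ Cco π χ l) : a + b ∈ Cco π χ l := by
  obtain ⟨k, hk, hk'⟩ := ha
  obtain ⟨j, hj, hj'⟩ := hb
  refine ⟨k + j, by rw [map_add, hk, hj], fun hdvd => ?_⟩
  have hp : Prime l := UniqueFactorizationMonoid.irreducible_iff_prime.mp hl
  have : l ∣ χ k * χ j := hdvd.trans (hD2 k j).dvd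
  rcases hp.dvd_or_dvd this with h | h
  · exact hk' h
  · exact hj' h

lemma sum_mem_cco (hχ : ∀ k : K, χ k ≠ 0)
    (hD2 : ∀ k k', Associated (χ (k + k')) (χ k * χ k'))
    {l : R} (hl : Irreducible l) {ι : Type*} (s : Finset ι) (f : ι → C)
    (hf : ∀ i ∈ s, f i ∈ Cco π χ l) : (∑ i ∈ s, f i) ∈ Cco π χ l := by
  classical
  induction s using Finset.induction_on with
  | empty => simpa using zero_mem_cco hχ hD2 hl
  | insert _ _ hnotmem ih =>
    rw [Finset.sum_insert hnotmem]
    exact add_mem_cco hD2 hl (hf _ (Finset.mem_insert_self _ _))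
      (ih fun i hi => hf i (Finset.mem_insert_of_mem hi))

lemma delta_mem_cco {l : R} (hl : Irreducible l) {c : C}
    (hc : c ∈ DeltaSet π χ) : c ∈ Cco π χ l := by
  obtain ⟨k, hk, hu⟩ := hc
  exact ⟨k, hk, fun hdvd => hl.not_isUnit (isUnit_of_dvd_unit hdvd hu)⟩

/-- If `c` is `lam`-primary and `μ` is an irreducible not `*`-associated to `lam`,
then `c ∈ C^μ`. -/
lemma prim_mem_cco (hσ : ∀ r, σ (σ r) = r) {μ lam : R}
    (hμ : Irreducible μ) (hlam : Irreducible lam) (h : ¬ StarAssoc σ μ lam)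
    {c : C} (hc : c ∈ Cprim σ π χ lam) : c ∈ Cco π χ μ := by
  obtain ⟨k, hk, n, hassoc⟩ := hc
  refine ⟨k, hk, fun hdvd => ?_⟩
  have hp : Prime μ := UniqueFactorizationMonoid.irreducible_iff_prime.mp hμ
  have h1 : μ ∣ Sdual σ lam ^ n := hdvd.trans hassoc.dvd
  have h2 : μ ∣ Sdual σ lam := hp.dvd_of_dvd_pow h1
  unfold Sdual at h2
  split_ifs at h2 with hcase
  · exact h (Or.inl (hμ.associated_of_dvd hlam h2))
  · rcases hp.dvd_or_dvd h2 with h3 | h3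
    · exact h (Or.inl (hμ.associated_of_dvd hlam h3))
    · exact h (Or.inr (hμ.associated_of_dvd (sigma_irreducible hσ hlam) h3))

end Helpers

/-- If `Φ_L` is surjective (every class is `Δ` plus a sum of primary classes), then
`Φ_R` is surjective. -/
theorem statement1
    {K C R : Type*} [AddCommMonoid K] [AddCommGroup C]
    [CommRing R] [IsDomain R] [UniqueFactorizationMonoid R]
    (π : K →+ C) (hπ : Function.Surjective π)
    (σ : R →+* R) (hσ : ∀ r, σ (σ r) = r)
    (χ : K → R) (hχ : ∀ k, χ k ≠ 0)
    (hD1 : ∀ k, Associated (σ (χ k)) (χ k))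
    (hD2 : ∀ k k', Associated (χ (k + k')) (χ k * χ k'))
    (hD3 : ∀ k, ∃ j, π j = -π k ∧ Associated (χ j) (χ k))
    (hL : ∀ c : C, ∃ d ∈ DeltaSet π χ, ∃ n : ℕ, ∃ lam : Fin n → R, ∃ cs : Fin n → C,
      (∀ i, Irreducible (lam i)) ∧ (∀ i, cs i ∈ Cprim σ π χ (lam i)) ∧
      c = d + ∑ i, cs i) :
    ∀ c : C, ∀ l : R, Irreducible l → ∃ d : C,
      c - d ∈ Cco π χ l ∧
      ∀ μ : R, Irreducible μ → ¬ StarAssoc σ l μ → d ∈ Cco π χ μ := by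
  intro c l hl
  obtain ⟨d0, hd0, n, lam, cs, hlam, hcs, hc⟩ := hL c
  classical
  set P : Fin n → Prop := fun i => StarAssoc σ l (lam i) with hP
  refine ⟨(∑ i ∈ Finset.univ.filter (fun i => P i), cs i), ?_, ?_⟩
  · have hsplit : c - ∑ i ∈ Finset.univ.filter (fun i => P i), cs i
        = d0 + ∑ i ∈ Finset.univ.filter (fun i => ¬ P i), cs i := by
      rw [hc, ← Finset.sum_filter_add_sum_filter_not Finset.univ (fun i => P i) cs]
      abel
    rw [hsplit]
    refine add_mem_cco hD2 hl (delta_mem_cco hl hd0) ?_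
    refine sum_mem_cco hχ hD2 hl _ _ fun i hi => ?_
    have hi' : ¬ P i := (Finset.mem_filter.mp hi).2
    exact prim_mem_cco hσ hl (hlam i) hi' (hcs i)
  · intro μ hμ hμl
    refine sum_mem_cco hχ hD2 hμ _ _ fun i hi => ?_
    have hi' : P i := (Finset.mem_filter.mp hi).2
    refine prim_mem_cco hσ hμ (hlam i) (fun hμlam => ?_) (hcs i)
    exact hμl (starAssoc_trans hσ hi' hμlam)
end

section
/- Suppose Φ_R is injective, i.e., every c ∈ C lying in C^λ for every irreducible λ of R lies in Δ. Then the following splitting property holds: if k, j ∈ K are such that Δ_k and Δ_j have no common irreducible factor (are relatively prime in R) and π(k) + π(j) ∈ Δ, then π(k) ∈ Δ and π(j) ∈ Δ. -/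
/-- If `Φ_R` is injective, then the splitting property holds: if `Δ_k` and `Δ_j` are
relatively prime and `π k + π j ∈ Δ`, then `π k ∈ Δ` and `π j ∈ Δ`. -/
theorem statement2
    {K C R : Type*} [AddCommMonoid K] [AddCommGroup C]
    [CommRing R] [IsDomain R] [UniqueFactorizationMonoid R]
    (π : K →+ C) (hπ : Function.Surjective π)
    (σ : R →+* R) (hσ : ∀ r, σ (σ r) = r)
    (χ : K → R) (hχ : ∀ k, χ k ≠ 0)
    (hD1 : ∀ k, Associated (σ (χ k)) (χ k))
    (hD2 : ∀ k k', Associated (χ (k + k')) (χ k * χ k'))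
    (hD3 : ∀ k, ∃ j, π j = -π k ∧ Associated (χ j) (χ k))
    (hR : ∀ c : C, (∀ l : R, Irreducible l → c ∈ Cco π χ l) → c ∈ DeltaSet π χ)
    (k j : K)
    (hcop : ∀ p : R, Irreducible p → p ∣ χ k → ¬ p ∣ χ j)
    (hsum : π k + π j ∈ DeltaSet π χ) :
    π k ∈ DeltaSet π χ ∧ π j ∈ DeltaSet π χ := by
  obtain ⟨m, hm, hmu⟩ := hsum
  obtain ⟨j', hj', hjassoc⟩ := hD3 j
  obtain ⟨k', hk', hkassoc⟩ := hD3 k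
  have h1 : Associated (χ (m + j')) (χ j) :=
    (hD2 m j').trans (((mul_comm (χ m) (χ j')) ▸
      associated_mul_unit_left (χ j') (χ m) hmu).trans hjassoc)
  have h2 : Associated (χ (m + k')) (χ k) :=
    (hD2 m k').trans (((mul_comm (χ m) (χ k')) ▸
      associated_mul_unit_left (χ k') (χ m) hmu).trans hkassoc)
  have pmj : π (m + j') = π k := by rw [map_add, hm, hj']; abel
  have pmk : π (m + k') = π j := by rw [map_add, hm, hk']; abel
  constructor
  · refine hR _ (fun l hl => ?_)
    by_cases hd : l ∣ χ j
    · exact ⟨k, rfl, fun h => hcop l hl h hd⟩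
    · exact ⟨m + j', pmj, fun h => hd (h1.dvd_iff_dvd_right.mp h)⟩
  · refine hR _ (fun l hl => ?_)
    by_cases hd : l ∣ χ k
    · exact ⟨j, rfl, hcop l hl hd⟩
    · exact ⟨m + k', pmk, fun h => hd (h2.dvd_iff_dvd_right.mp h)⟩
end

section
/- Let A be a subgroup of C and q : C → G := C/A the quotient map. If A is left primary decomposable (with respect to Δ(A) = Δ ∩ A and A_λ = C_λ ∩ A) and G is left primary decomposable (with respect to Δ(G) = q(Δ) and G_λ = q(C_λ)), then C is left primary decomposable (with respect to Δ and C_λ). -/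
/-- Left primary decomposability of a subgroup with carrier `S` of an abelian group `G`,
with respect to a designated subset `D` ("`Δ`") and primary parts `P λ`:
every element of `S` is `D` plus a finite sum of primary elements, and a sum of
primary elements along pairwise non-`*`-associate irreducibles lying in `D` has all
summands in `D`. -/
def LeftPD {R G : Type*} [CommRing R] [AddCommGroup G] (σ : R →+* R)
    (S D : Set G) (P : R → Set G) : Prop :=
  (∀ g ∈ S, ∃ d ∈ D, ∃ n : ℕ, ∃ lam : Fin n → R, ∃ cs : Fin n → G,
    (∀ i, Irreducible (lam i)) ∧ (∀ i, cs i ∈ P (lam i)) ∧ g = d + ∑ i, cs i) ∧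
  (∀ (n : ℕ) (lam : Fin n → R) (cs : Fin n → G),
    (∀ i, Irreducible (lam i)) →
    (∀ i j, i ≠ j → ¬ StarAssoc σ (lam i) (lam j)) →
    (∀ i, cs i ∈ P (lam i)) →
    (∑ i, cs i) ∈ D → ∀ i, cs i ∈ D)

/-- If a subgroup `A ≤ C` and the quotient `G = C ⧸ A` are left primary decomposable,
then so is `C`. -/
theorem statement5
    {K C R : Type*} [AddCommMonoid K] [AddCommGroup C]
    [CommRing R] [IsDomain R] [UniqueFactorizationMonoid R]
    (π : K →+ C) (hπ : Function.Surjective π)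
    (σ : R →+* R) (hσ : ∀ r, σ (σ r) = r)
    (χ : K → R) (hχ : ∀ k, χ k ≠ 0)
    (hD1 : ∀ k, Associated (σ (χ k)) (χ k))
    (hD2 : ∀ k k', Associated (χ (k + k')) (χ k * χ k'))
    (hD3 : ∀ k, ∃ j, π j = -π k ∧ Associated (χ j) (χ k))
    (A : AddSubgroup C)
    (hA : LeftPD σ (A : Set C) (DeltaSet π χ ∩ A) (fun l => Cprim σ π χ l ∩ A))
    (hG : LeftPD σ (Set.univ : Set (C ⧸ A))
      ((QuotientAddGroup.mk' A) '' DeltaSet π χ)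
      (fun l => (QuotientAddGroup.mk' A) '' Cprim σ π χ l)) :
    LeftPD σ (Set.univ : Set C) (DeltaSet π χ) (Cprim σ π χ) := by
  classical
  set q : C →+ C ⧸ A := QuotientAddGroup.mk' A with hqdef
  -- `0 ∈ Δ`
  have hunit0 : IsUnit (χ 0) := by
    obtain ⟨u, hu⟩ := hD2 0 0
    rw [add_zero] at hu
    have := mul_left_cancel₀ (hχ 0) hu
    exact this ▸ u.isUnit
  have hzeroD : (0 : C) ∈ DeltaSet π χ := ⟨0, map_zero π, hunit0⟩
  -- `Δ` is closed under addition
  have haddD : ∀ {c c' : C}, c ∈ DeltaSet π χ → c' ∈ DeltaSet π χ →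
      c + c' ∈ DeltaSet π χ := by
    rintro c c' ⟨k, rfl, hk⟩ ⟨k', rfl, hk'⟩
    exact ⟨k + k', map_add π k k', (hD2 k k').symm.isUnit (hk.mul hk')⟩
  -- `Δ` is closed under negation
  have hnegD : ∀ {c : C}, c ∈ DeltaSet π χ → -c ∈ DeltaSet π χ := by
    rintro c ⟨k, rfl, hk⟩
    obtain ⟨j, hj, hjk⟩ := hD3 k
    exact ⟨j, hj, hjk.symm.isUnit hk⟩
  -- `Δ` is closed under finite sums
  have hsumD : ∀ (m : ℕ) (f : Fin m → C), (∀ i, f i ∈ DeltaSet π χ) →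
      (∑ i, f i) ∈ DeltaSet π χ := by
    intro m f hf
    exact Finset.sum_induction f (· ∈ DeltaSet π χ)
      (fun a b ha hb => haddD ha hb) hzeroD (fun i _ => hf i)
  -- `C_λ` is closed under adding elements of `Δ`
  have hprimAdd : ∀ {l : R} {c c' : C}, c ∈ Cprim σ π χ l → c' ∈ DeltaSet π χ →
      c + c' ∈ Cprim σ π χ l := by
    rintro l c c' ⟨k, rfl, m, hk⟩ ⟨k', rfl, hk'⟩
    refine ⟨k + k', map_add π k k', m, (hD2 k k').trans ?_⟩
    simpa using Associated.mul_mul hk (associated_one_iff_isUnit.mpr hk')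
  -- membership in `A` from vanishing in the quotient
  have hmemA : ∀ {c : C}, q c = 0 → c ∈ A := by
    intro c hc
    rw [hqdef, QuotientAddGroup.mk'_apply] at hc
    exact (QuotientAddGroup.eq_zero_iff c).mp hc
  constructor
  · -- decomposition
    intro g _
    obtain ⟨d', hd', n, lam, cs', hirr, hmem, hgeq⟩ := hG.1 (q g) trivial
    obtain ⟨d, hdD, hdq⟩ := hd'
    choose c hc hcq using hmem
    have hqa : q (g - (d + ∑ i, c i)) = 0 := by
      rw [map_sub, map_add, map_sum]
      simp only [hcq, hdq, hgeq]
      abel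
    obtain ⟨d2, hd2, m, mu, cs2, hirr2, hmem2, haeq⟩ := hA.1 _ (hmemA hqa)
    refine ⟨d + d2, haddD hdD hd2.1, n + m, Fin.append lam mu, Fin.append c cs2,
      ?_, ?_, ?_⟩
    · intro i
      refine Fin.addCases (fun i => ?_) (fun j => ?_) i
      · simpa [Fin.append_left] using hirr i
      · simpa [Fin.append_right] using hirr2 j
    · intro i
      refine Fin.addCases (fun i => ?_) (fun j => ?_) i
      · simpa [Fin.append_left] using hc i
      · simpa [Fin.append_right] using (hmem2 j).1
    · rw [Fin.sum_univ_add]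
      simp only [Fin.append_left, Fin.append_right]
      have h := sub_eq_iff_eq_add.mp haeq
      rw [h]
      abel
  · -- purity
    intro n lam cs hirr hnsa hmem hsum
    have h1 : ∀ i, q (cs i) ∈ q '' Cprim σ π χ (lam i) := fun i => ⟨cs i, hmem i, rfl⟩
    have h2 : (∑ i, q (cs i)) ∈ q '' DeltaSet π χ := by
      rw [← map_sum]
      exact ⟨_, hsum, rfl⟩
    have h3 := hG.2 n lam (fun i => q (cs i)) hirr hnsa h1 h2
    choose d hdD hdq using h3
    have haA : ∀ i, cs i - d i ∈ A := by
      intro i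
      refine hmemA ?_
      rw [map_sub, hdq i, sub_self]
    have haprim : ∀ i, cs i - d i ∈ Cprim σ π χ (lam i) := by
      intro i
      rw [sub_eq_add_neg]
      exact hprimAdd (hmem i) (hnegD (hdD i))
    have hsumA : (∑ i, (cs i - d i)) ∈ DeltaSet π χ ∩ A := by
      constructor
      · rw [Finset.sum_sub_distrib, sub_eq_add_neg]
        exact haddD hsum (hnegD (hsumD n d hdD))
      · exact sum_mem (fun i _ => haA i)
    have h5 := hA.2 n lam (fun i => cs i - d i) hirr hnsa
      (fun i => ⟨haprim i, haA i⟩) hsumA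
    intro i
    have : cs i = d i + (cs i - d i) := by abel
    rw [this]
    exact haddD (hdD i) (h5 i).1
end

section
/- Let A be a subgroup of C and q : C → G := C/A the quotient map. If A is right primary decomposable (with respect to Δ(A) = Δ ∩ A and A^λ = C^λ ∩ A) and G is right primary decomposable (with respect to Δ(G) = q(Δ) and G^λ = q(C^λ)), then C is right primary decomposable (with respect to Δ and C^λ). -/
/-- Right primary decomposability of a subgroup with carrier `S` of an abelian group `G`,
with respect to a designated subset `D` ("`Δ`") and coprimary parts `Q λ`:
an element of `S` lying in every `Q λ` lies in `D`, and for every `g ∈ S` and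
irreducible `λ` there is `d ∈ S` with `g - d ∈ Q λ` and `d ∈ Q μ` for every
irreducible `μ` not `*`-associate to `λ`. -/
def RightPD {R G : Type*} [CommRing R] [AddCommGroup G] (σ : R →+* R)
    (S D : Set G) (Q : R → Set G) : Prop :=
  (∀ g ∈ S, (∀ l : R, Irreducible l → g ∈ Q l) → g ∈ D) ∧
  (∀ g ∈ S, ∀ l : R, Irreducible l → ∃ d ∈ S, g - d ∈ Q l ∧
    ∀ μ : R, Irreducible μ → ¬ StarAssoc σ l μ → d ∈ Q μ)

set_option linter.unusedSectionVars false

section Aux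

variable {K C R : Type*} [AddCommMonoid K] [AddCommGroup C]
  [CommRing R] [IsDomain R] [UniqueFactorizationMonoid R]

lemma starAssoc_symm' (σ : R →+* R) (hσ : ∀ r, σ (σ r) = r) {a b : R}
    (h : StarAssoc σ a b) : StarAssoc σ b a := by
  rcases h with h | h
  · exact Or.inl h.symm
  · right
    have h2 := h.map σ.toMonoidHom
    simp only [RingHom.toMonoidHom_eq_coe, MonoidHom.coe_coe] at h2
    rw [hσ] at h2
    exact h2.symm

lemma starAssoc_of_assoc' (σ : R →+* R) {x b b' : R}
    (h : StarAssoc σ x b) (h' : Associated b b') : StarAssoc σ x b' := by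
  rcases h with h | h
  · exact Or.inl (h.trans h')
  · right
    have h2 := h'.map σ.toMonoidHom
    simp only [RingHom.toMonoidHom_eq_coe, MonoidHom.coe_coe] at h2
    exact h.trans h2

lemma dvd_of_starAssoc_dvd' (σ : R →+* R) (χ : K → R)
    (hD1 : ∀ k, Associated (σ (χ k)) (χ k)) {a b : R}
    (h : StarAssoc σ a b) {k : K} (hd : b ∣ χ k) : a ∣ χ k := by
  rcases h with h | h
  · exact h.dvd.trans hd
  · have h2 : σ b ∣ σ (χ k) := map_dvd σ hd
    exact h.dvd.trans (h2.trans (hD1 k).dvd)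

lemma Cco_add' (π : K →+ C) (χ : K → R)
    (hD2 : ∀ k k', Associated (χ (k + k')) (χ k * χ k')) {l : R} (hl : Prime l)
    {x y : C} (hx : x ∈ Cco π χ l) (hy : y ∈ Cco π χ l) : x + y ∈ Cco π χ l := by
  obtain ⟨k, hk, hkd⟩ := hx
  obtain ⟨k', hk', hkd'⟩ := hy
  refine ⟨k + k', by rw [map_add, hk, hk'], fun hdvd => ?_⟩
  have h2 : l ∣ χ k * χ k' := hdvd.trans (hD2 k k').dvd
  rcases hl.2.2 _ _ h2 with h | h
  · exact hkd h
  · exact hkd' h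

lemma Cco_neg' (π : K →+ C) (χ : K → R)
    (hD3 : ∀ k, ∃ j, π j = -π k ∧ Associated (χ j) (χ k)) {l : R}
    {x : C} (hx : x ∈ Cco π χ l) : -x ∈ Cco π χ l := by
  obtain ⟨k, hk, hkd⟩ := hx
  obtain ⟨j, hj, ha⟩ := hD3 k
  exact ⟨j, by rw [hj, hk], fun hd => hkd (hd.trans ha.dvd)⟩

end Aux

/-- If a subgroup `A ≤ C` and the quotient `G = C ⧸ A` are right primary decomposable,
then so is `C`. -/
theorem statement6
    {K C R : Type*} [AddCommMonoid K] [AddCommGroup C]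
    [CommRing R] [IsDomain R] [UniqueFactorizationMonoid R]
    (π : K →+ C) (hπ : Function.Surjective π)
    (σ : R →+* R) (hσ : ∀ r, σ (σ r) = r)
    (χ : K → R) (hχ : ∀ k, χ k ≠ 0)
    (hD1 : ∀ k, Associated (σ (χ k)) (χ k))
    (hD2 : ∀ k k', Associated (χ (k + k')) (χ k * χ k'))
    (hD3 : ∀ k, ∃ j, π j = -π k ∧ Associated (χ j) (χ k))
    (A : AddSubgroup C)
    (hA : RightPD σ (A : Set C) (DeltaSet π χ ∩ A) (fun l => Cco π χ l ∩ A))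
    (hG : RightPD σ (Set.univ : Set (C ⧸ A))
      ((QuotientAddGroup.mk' A) '' DeltaSet π χ)
      (fun l => (QuotientAddGroup.mk' A) '' Cco π χ l)) :
    RightPD σ (Set.univ : Set C) (DeltaSet π χ) (Cco π χ) := by
  set q := QuotientAddGroup.mk' A with hq
  have hker : ∀ x : C, q x = 0 → x ∈ A := by
    intro x hx
    rwa [← QuotientAddGroup.ker_mk' A, AddMonoidHom.mem_ker]
  have hprime : ∀ {l : R}, Irreducible l → Prime l := fun hl =>
    (UniqueFactorizationMonoid.irreducible_iff_prime).mp hl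
  -- 0 lies in every coprimary part
  have hzero : ∀ ν : R, Irreducible ν → (0 : C) ∈ Cco π χ ν := by
    intro ν hν
    obtain ⟨e, heA, hce, -⟩ := hA.2 0 (A.zero_mem) ν hν
    have h1 : (0 : C) - e ∈ Cco π χ ν := hce.1
    have h2 := Cco_add' π χ hD2 (hprime hν) h1 (Cco_neg' π χ hD3 h1)
    simpa using h2
  -- purification lemma along a list of pairwise non-*-associate irreducibles
  have purify : ∀ L : List R, L.Pairwise (fun a b => ¬ StarAssoc σ a b) →
      (∀ μ ∈ L, Irreducible μ) → ∀ z : C,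
      (∀ μ ∈ L, ∃ y ∈ Cco π χ μ, z - y ∈ A) →
      ∃ e ∈ (A : Set C),
        (∀ ν : R, Irreducible ν → (∀ μ ∈ L, ¬ StarAssoc σ μ ν) → e ∈ Cco π χ ν) ∧
        ∀ μ ∈ L, z - e ∈ Cco π χ μ := by
    intro L
    induction L with
    | nil =>
      intro _ _ z _
      exact ⟨0, A.zero_mem, fun ν hν _ => hzero ν hν, by simp⟩
    | cons μ₀ T ih =>
      intro hp hirr z hpur
      have hμ₀ : Irreducible μ₀ := hirr μ₀ (List.mem_cons_self)
      obtain ⟨y, hy, hzy⟩ := hpur μ₀ (List.mem_cons_self)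
      obtain ⟨e₁, he₁A, hae₁, he₁⟩ := hA.2 (z - y) hzy μ₀ hμ₀
      have hz'₁ : z - e₁ ∈ Cco π χ μ₀ := by
        have h2 := Cco_add' π χ hD2 (hprime hμ₀) hy hae₁.1
        have hrw : y + (z - y - e₁) = z - e₁ := by abel
        rwa [hrw] at h2
      obtain ⟨hhead, htail⟩ := List.pairwise_cons.mp hp
      obtain ⟨e₂, he₂A, hc1, hc2⟩ := ih htail
        (fun μ hμ => hirr μ (List.mem_cons_of_mem _ hμ)) (z - e₁)
        (by
          intro μ hμ
          obtain ⟨yμ, h1, h2⟩ := hpur μ (List.mem_cons_of_mem _ hμ)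
          refine ⟨yμ, h1, ?_⟩
          have hrw : z - e₁ - yμ = (z - yμ) - e₁ := by abel
          rw [hrw]
          exact A.sub_mem h2 he₁A)
      refine ⟨e₁ + e₂, A.add_mem he₁A he₂A, ?_, ?_⟩
      · intro ν hν hall
        have h1 := (he₁ ν hν (hall μ₀ (List.mem_cons_self))).1
        have h2 := hc1 ν hν (fun μ hμ => hall μ (List.mem_cons_of_mem _ hμ))
        exact Cco_add' π χ hD2 (hprime hν) h1 h2
      · intro μ hμ
        rcases List.mem_cons.mp hμ with rfl | hμT
        · have he₂μ₀ : e₂ ∈ Cco π χ μ := hc1 μ hμ₀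
            (fun μ' hμ' hs => hhead μ' hμ' (starAssoc_symm' σ hσ hs))
          have h2 := Cco_add' π χ hD2 (hprime hμ₀) hz'₁ (Cco_neg' π χ hD3 he₂μ₀)
          have hrw : z - e₁ + -e₂ = z - (e₁ + e₂) := by abel
          rwa [hrw] at h2
        · have h2 := hc2 μ hμT
          have hrw : z - e₁ - e₂ = z - (e₁ + e₂) := by abel
          rwa [hrw] at h2
  constructor
  · -- part 1
    intro g _ hg
    have h1 : ∀ lam : R, Irreducible lam → q g ∈ q '' Cco π χ lam :=
      fun lam hlam => ⟨g, hg lam hlam, rfl⟩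
    obtain ⟨δ, hδ, hqδ⟩ := hG.1 (q g) (Set.mem_univ _) h1
    have hgδA : g - δ ∈ A := by
      refine hker _ ?_
      rw [map_sub, hqδ, sub_self]
    have hδCco : ∀ lam : R, Irreducible lam → δ ∈ Cco π χ lam := by
      intro lam hlam
      obtain ⟨k, hk, hu⟩ := hδ
      exact ⟨k, hk, fun hd => hlam.not_isUnit (isUnit_of_dvd_unit hd hu)⟩
    have hmem : ∀ lam : R, Irreducible lam → g - δ ∈ Cco π χ lam ∩ A := by
      intro lam hlam
      refine ⟨?_, hgδA⟩
      have h2 := Cco_add' π χ hD2 (hprime hlam) (hg lam hlam)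
        (Cco_neg' π χ hD3 (hδCco lam hlam))
      rwa [← sub_eq_add_neg] at h2
    obtain ⟨hΔ, -⟩ := hA.1 (g - δ) hgδA hmem
    obtain ⟨k1, hk1, hu1⟩ := hδ
    obtain ⟨k2, hk2, hu2⟩ := hΔ
    refine ⟨k1 + k2, ?_, ?_⟩
    · rw [map_add, hk1, hk2]; abel
    · exact (hD2 k1 k2).symm.isUnit (hu1.mul hu2)
  · -- part 2
    intro c _ l hl
    obtain ⟨dbar, -, h1, h2⟩ := hG.2 (q c) (Set.mem_univ _) l hl
    obtain ⟨x, hx, hqx⟩ := h1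
    have hqz : q (c - x) = dbar := by
      rw [map_sub, hqx, sub_sub_cancel]
    set z : C := c - x with hzdef
    have hpurity : ∀ μ : R, Irreducible μ → ¬ StarAssoc σ l μ →
        ∃ y ∈ Cco π χ μ, z - y ∈ A := by
      intro μ hμ hn
      obtain ⟨y, hy, hqy⟩ := h2 μ hμ hn
      refine ⟨y, hy, hker _ ?_⟩
      rw [map_sub, hqy, hqz, sub_self]
    obtain ⟨kz, hkz⟩ := hπ z
    -- build list of representatives of *-classes of factors of χ kz not *-assoc to l
    have exL : ∀ ms : List R, (∀ μ ∈ ms, Irreducible μ) →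
        ∃ L : List R, (∀ μ ∈ L, Irreducible μ ∧ ¬ StarAssoc σ l μ) ∧
          L.Pairwise (fun a b => ¬ StarAssoc σ a b) ∧
          ∀ μ ∈ ms, ¬ StarAssoc σ l μ → ∃ μ' ∈ L, StarAssoc σ μ' μ := by
      intro ms
      induction ms with
      | nil => exact fun _ => ⟨[], by simp, List.Pairwise.nil, by simp⟩
      | cons a T ih =>
        intro hi
        obtain ⟨L, hL1, hL2, hL3⟩ := ih (fun μ hμ => hi μ (List.mem_cons_of_mem _ hμ))
        by_cases h1 : StarAssoc σ l a
        · refine ⟨L, hL1, hL2, ?_⟩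
          intro μ hμ hnl
          rcases List.mem_cons.mp hμ with rfl | hμT
          · exact absurd h1 hnl
          · exact hL3 μ hμT hnl
        · by_cases h2 : ∃ μ' ∈ L, StarAssoc σ μ' a
          · refine ⟨L, hL1, hL2, ?_⟩
            intro μ hμ hnl
            rcases List.mem_cons.mp hμ with rfl | hμT
            · exact h2
            · exact hL3 μ hμT hnl
          · refine ⟨a :: L, ?_, ?_, ?_⟩
            · intro μ hμ
              rcases List.mem_cons.mp hμ with rfl | hμT
              · exact ⟨hi μ (List.mem_cons_self), h1⟩
              · exact hL1 μ hμT
            · refine List.pairwise_cons.mpr ⟨?_, hL2⟩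
              intro b hb hs
              exact h2 ⟨b, hb, starAssoc_symm' σ hσ hs⟩
            · intro μ hμ hnl
              rcases List.mem_cons.mp hμ with rfl | hμT
              · exact ⟨μ, List.mem_cons_self, Or.inl (Associated.refl μ)⟩
              · obtain ⟨μ', hμ', hs⟩ := hL3 μ hμT hnl
                exact ⟨μ', List.mem_cons_of_mem _ hμ', hs⟩
    obtain ⟨L, hL1, hL2, hL3⟩ := exL
      ((UniqueFactorizationMonoid.factors (χ kz)).toList)
      (fun μ hμ => UniqueFactorizationMonoid.irreducible_of_factor μ
        (Multiset.mem_toList.mp hμ))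
    obtain ⟨e, heA, hc1, hc2⟩ := purify L hL2 (fun μ hμ => (hL1 μ hμ).1) z
      (fun μ hμ => hpurity μ (hL1 μ hμ).1 (hL1 μ hμ).2)
    refine ⟨z - e, Set.mem_univ _, ?_, ?_⟩
    · -- c - (z - e) = x + e ∈ Cco l
      have heL : e ∈ Cco π χ l := hc1 l hl
        (fun μ hμ hs => (hL1 μ hμ).2 (starAssoc_symm' σ hσ hs))
      have h3 := Cco_add' π χ hD2 (hprime hl) hx heL
      have hrw : x + e = c - (z - e) := by rw [hzdef]; abel
      rwa [hrw] at h3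
    · intro μ hμ hnl
      by_cases hcov : ∃ μ' ∈ L, StarAssoc σ μ' μ
      · obtain ⟨μ', hμ'L, hs⟩ := hcov
        obtain ⟨k, hk, hnd⟩ := hc2 μ' hμ'L
        exact ⟨k, hk, fun hd => hnd (dvd_of_starAssoc_dvd' σ χ hD1 hs hd)⟩
      · -- μ does not divide χ kz
        have hznd : ¬ μ ∣ χ kz := by
          intro hdvd
          obtain ⟨qf, hqf, hassoc⟩ :=
            UniqueFactorizationMonoid.exists_mem_factors_of_dvd (hχ kz) hμ hdvd
          have hqfirr : Irreducible qf :=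
            UniqueFactorizationMonoid.irreducible_of_factor qf hqf
          by_cases hql : StarAssoc σ l qf
          · exact hnl (starAssoc_of_assoc' σ hql hassoc.symm)
          · obtain ⟨μ', hμ', hs⟩ := hL3 qf (Multiset.mem_toList.mpr hqf) hql
            exact hcov ⟨μ', hμ', starAssoc_of_assoc' σ hs hassoc.symm⟩
        have hzmem : z ∈ Cco π χ μ := ⟨kz, hkz, hznd⟩
        have hemem : e ∈ Cco π χ μ := hc1 μ hμ
          (fun μ' hμ' hs => hcov ⟨μ', hμ', hs⟩)
        have h3 := Cco_add' π χ hD2 (hprime hμ) hzmem (Cco_neg' π χ hD3 hemem)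
        rwa [← sub_eq_add_neg] at h3
end

section
/- Let A be a subgroup of C and q : C → G := C/A the quotient map. Suppose A is strongly primary decomposable: for every k ∈ K with π(k) ∈ A one can write π(k) = d + a_1 + … + a_n with d ∈ Δ ∩ A and a_i ∈ C_{λ_i} ∩ A, where each λ_i is an irreducible divisor of Δ_k; and whenever a_1 + … + a_n ∈ Δ ∩ A with a_i ∈ C_{λ_i} ∩ A for pairwise non-*-associate irreducibles λ_i, each a_i ∈ Δ ∩ A. Suppose also G is strongly primary decomposable: for every k ∈ K one can write q(π(k)) = d + g_1 + … + g_n with d ∈ q(Δ) and g_i ∈ q(C_{λ_i}), where each λ_i is an irreducible divisor of Δ_k; and the analogous uniqueness holds with q(Δ) and q(C_λ). Then C is strongly primary decomposable: for every k ∈ K one can write π(k) = d + c_1 + … + c_n with d ∈ Δ and c_i ∈ C_{λ_i}, where each λ_i is an irreducible divisor of Δ_k, and whenever c_1 + … + c_n ∈ Δ with c_i ∈ C_{λ_i} for pairwise non-*-associate irreducibles λ_i, each c_i ∈ Δ. -/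
/-- Strong primary decomposability for the image under `p : K → G` of the sub-monoid
`SK ⊆ K`, relative to a designated subset `D` ("`Δ`") and primary parts `P λ` in `G`:
(strong existence) for `k ∈ SK`, `p k` is `D` plus a finite sum of `λᵢ`-primary
elements where each `λᵢ` is an irreducible divisor of `χ k`; (uniqueness) a sum of
primary elements along pairwise non-`*`-associate irreducibles lying in `D` has all
summands in `D`. -/
def StrongPD {K R G : Type*} [AddCommMonoid K] [CommRing R] [AddCommGroup G]
    (σ : R →+* R) (χ : K → R) (p : K → G) (SK : Set K)
    (D : Set G) (P : R → Set G) : Prop :=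
  (∀ k ∈ SK, ∃ d ∈ D, ∃ n : ℕ, ∃ lam : Fin n → R, ∃ cs : Fin n → G,
    (∀ i, Irreducible (lam i) ∧ lam i ∣ χ k) ∧
    (∀ i, cs i ∈ P (lam i)) ∧ p k = d + ∑ i, cs i) ∧
  (∀ (n : ℕ) (lam : Fin n → R) (cs : Fin n → G),
    (∀ i, Irreducible (lam i)) →
    (∀ i j, i ≠ j → ¬ StarAssoc σ (lam i) (lam j)) →
    (∀ i, cs i ∈ P (lam i)) →
    (∑ i, cs i) ∈ D → ∀ i, cs i ∈ D)

/-- If a subgroup `A ≤ C` and the quotient `G = C ⧸ A` are strongly primary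
decomposable, then so is `C`. -/
theorem statement7
    {K C R : Type*} [AddCommMonoid K] [AddCommGroup C]
    [CommRing R] [IsDomain R] [UniqueFactorizationMonoid R]
    (π : K →+ C) (hπ : Function.Surjective π)
    (σ : R →+* R) (hσ : ∀ r, σ (σ r) = r)
    (χ : K → R) (hχ : ∀ k, χ k ≠ 0)
    (hD1 : ∀ k, Associated (σ (χ k)) (χ k))
    (hD2 : ∀ k k', Associated (χ (k + k')) (χ k * χ k'))
    (hD3 : ∀ k, ∃ j, π j = -π k ∧ Associated (χ j) (χ k))
    (A : AddSubgroup C)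
    (hA : StrongPD σ χ (fun k => π k) {k | π k ∈ A}
      (DeltaSet π χ ∩ A) (fun l => Cprim σ π χ l ∩ A))
    (hG : StrongPD σ χ (fun k => QuotientAddGroup.mk' A (π k)) Set.univ
      ((QuotientAddGroup.mk' A) '' DeltaSet π χ)
      (fun l => (QuotientAddGroup.mk' A) '' Cprim σ π χ l)) :
    StrongPD σ χ (fun k => π k) Set.univ (DeltaSet π χ) (Cprim σ π χ) := by
  classical
  set q := QuotientAddGroup.mk' A with hqdef
  -- χ 0 is a unit
  have hchi0 : IsUnit (χ 0) := by
    obtain ⟨u, hu⟩ := hD2 0 0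
    rw [add_zero] at hu
    have h0 : (u : R) = χ 0 := mul_left_cancel₀ (hχ 0) hu
    exact h0 ▸ u.isUnit
  -- χ of a sum is associated to the product of χ's
  have hsumassoc : ∀ (n : ℕ) (f : Fin n → K),
      Associated (χ (∑ i, f i)) (∏ i, χ (f i)) := by
    intro n
    induction n with
    | zero =>
      intro f
      simpa using associated_one_iff_isUnit.mpr hchi0
    | succ m ih =>
      intro f
      rw [Fin.sum_univ_succ, Fin.prod_univ_succ]
      exact (hD2 (f 0) (∑ i : Fin m, f i.succ)).trans
        (Associated.mul_left (χ (f 0)) (ih (fun i => f i.succ)))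
  -- Δ is closed under addition
  have hDadd : ∀ {c1 c2 : C}, c1 ∈ DeltaSet π χ → c2 ∈ DeltaSet π χ →
      c1 + c2 ∈ DeltaSet π χ := by
    rintro c1 c2 ⟨k1, hk1, hu1⟩ ⟨k2, hk2, hu2⟩
    exact ⟨k1 + k2, by rw [map_add, hk1, hk2],
      (hD2 k1 k2).symm.isUnit (hu1.mul hu2)⟩
  constructor
  · -- existence
    intro k _hk
    obtain ⟨dbar, hdbar, n, lam, gs, hlam, hgs, hsum⟩ := hG.1 k trivial
    obtain ⟨d, hdΔ, hdq⟩ := hdbar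
    choose cs hcs hcq using hgs
    choose ks hks hexp using hcs
    choose es hes using hexp
    obtain ⟨kd, hkd, hkdu⟩ := hdΔ
    obtain ⟨jd, hjd, hjda⟩ := hD3 kd
    choose js hjs hjsa using fun i => hD3 (ks i)
    set k'' : K := k + (jd + ∑ i, js i) with hk''def
    have hπk'' : π k'' = π k - (d + ∑ i, cs i) := by
      rw [hk''def, map_add, map_add, map_sum, hjd, hkd]
      have h1 : ∀ i ∈ Finset.univ, π (js i) = -(cs i) := fun i _ => by
        rw [hjs i, hks i]
      rw [Finset.sum_congr rfl h1, Finset.sum_neg_distrib]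
      abel
    have hmemA : π k'' ∈ A := by
      apply (QuotientAddGroup.eq_zero_iff _).mp
      have : q (π k'') = 0 := by
        rw [hπk'', map_sub, map_add, map_sum, hdq,
          Finset.sum_congr rfl fun i _ => hcq i]
        have hsum2 : QuotientAddGroup.mk' A (π k) = dbar + ∑ i, gs i := hsum
        rw [hsum2]
        abel
      exact this
    have hχk'' : Associated (χ k'') (χ k * (χ jd * ∏ i, χ (js i))) :=
      (hD2 k _).trans (Associated.mul_left (χ k)
        ((hD2 jd _).trans (Associated.mul_left (χ jd) (hsumassoc n js))))
    have hjdunit : IsUnit (χ jd) := hjda.symm.isUnit hkdu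
    obtain ⟨d', hd'Δ, m, mu, as, hmu, has, hsum'⟩ := hA.1 k'' hmemA
    -- each mu j divides χ k
    have hmudvd : ∀ j, mu j ∣ χ k := by
      intro j
      have hp : Prime (mu j) := (hmu j).1.prime
      have hd : mu j ∣ χ k * (χ jd * ∏ i, χ (js i)) :=
        ((hmu j).2).trans hχk''.dvd
      rcases hp.dvd_or_dvd hd with h | h
      · exact h
      rcases hp.dvd_or_dvd h with h2 | h2
      · exact absurd (isUnit_of_dvd_unit h2 hjdunit) hp.not_unit
      obtain ⟨i, -, h3⟩ := hp.exists_mem_finset_dvd h2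
      have h4 : mu j ∣ Sdual σ (lam i) ^ es i :=
        h3.trans ((hjsa i).trans (hes i)).dvd
      have h5 : mu j ∣ Sdual σ (lam i) := hp.dvd_of_dvd_pow h4
      have h6 : Sdual σ (lam i) ∣ lam i * σ (lam i) := by
        unfold Sdual
        split
        · exact dvd_mul_right _ _
        · exact dvd_rfl
      rcases hp.dvd_or_dvd (h5.trans h6) with h8 | h8
      · exact h8.trans (hlam i).2
      · exact h8.trans ((map_dvd σ (hlam i).2).trans (hD1 k).dvd)
    refine ⟨d + d', hDadd ⟨kd, hkd, hkdu⟩ hd'Δ.1, n + m,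
      Fin.addCases lam mu, Fin.addCases cs as, ?_, ?_, ?_⟩
    · intro i
      refine Fin.addCases (fun i0 => ?_) (fun j0 => ?_) i
      · simpa using hlam i0
      · simp only [Fin.addCases_right]
        exact ⟨(hmu j0).1, hmudvd j0⟩
    · intro i
      refine Fin.addCases (fun i0 => ?_) (fun j0 => ?_) i
      · simp only [Fin.addCases_left]
        exact ⟨ks i0, hks i0, es i0, hes i0⟩
      · simp only [Fin.addCases_right]
        exact (has j0).1
    · have hsplit : ∑ i : Fin (n + m), Fin.addCases cs as i =
          ∑ i, cs i + ∑ i, as i := by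
        rw [Fin.sum_univ_add]; simp
      have h9 : π k - (d + ∑ i, cs i) = d' + ∑ i, as i := by
        rw [← hπk'']; exact hsum'
      have h10 := sub_eq_iff_eq_add.mp h9
      show π k = d + d' + ∑ i : Fin (n + m), Fin.addCases cs as i
      rw [hsplit, h10]; abel
  · -- uniqueness
    intro n lam cs hirr hnass hcs hsumΔ
    have hqcs : ∀ i, q (cs i) ∈ q '' Cprim σ π χ (lam i) :=
      fun i => ⟨cs i, hcs i, rfl⟩
    have hqsum : (∑ i, q (cs i)) ∈ q '' DeltaSet π χ := by
      rw [← map_sum]; exact ⟨_, hsumΔ, rfl⟩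
    have hqD := hG.2 n lam (fun i => q (cs i)) hirr hnass hqcs hqsum
    choose ds hds hdq using hqD
    have hbA : ∀ i, cs i - ds i ∈ A := fun i =>
      (QuotientAddGroup.eq_zero_iff _).mp
        (by rw [show ((cs i - ds i : C) : C ⧸ A) = q (cs i - ds i) from rfl,
              map_sub, hdq i, sub_self])
    choose ks hks hexp using hcs
    choose es hes using hexp
    choose kds hkds hkdu using hds
    choose jds hjds hjda using fun i => hD3 (kds i)
    have hjdsu : ∀ i, IsUnit (χ (jds i)) := fun i => (hjda i).symm.isUnit (hkdu i)
    have hbP : ∀ i, cs i - ds i ∈ Cprim σ π χ (lam i) ∩ A := by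
      intro i
      refine ⟨⟨ks i + jds i, ?_, es i, ?_⟩, hbA i⟩
      · rw [map_add, hks i, hjds i, hkds i, sub_eq_add_neg]
      · exact ((hD2 (ks i) (jds i)).trans
          (associated_mul_unit_left _ _ (hjdsu i))).trans (hes i)
    have hbD : (∑ i, (cs i - ds i)) ∈ DeltaSet π χ ∩ A := by
      constructor
      · obtain ⟨k0, hk0, hk0u⟩ := hsumΔ
        refine ⟨k0 + ∑ i, jds i, ?_, ?_⟩
        · rw [map_add, map_sum, hk0]
          have h1 : ∀ i ∈ Finset.univ, π (jds i) = -(ds i) := fun i _ => by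
            rw [hjds i, hkds i]
          rw [Finset.sum_congr rfl h1, Finset.sum_neg_distrib,
            Finset.sum_sub_distrib]
          abel
        · apply ((hD2 k0 _).trans (Associated.mul_left (χ k0)
            (hsumassoc n jds))).symm.isUnit
          exact hk0u.mul (Finset.prod_induction _ IsUnit (fun a b ha hb => ha.mul hb)
            isUnit_one (fun i _ => hjdsu i))
      · exact sum_mem fun i _ => hbA i
    have hfin := hA.2 n lam (fun i => cs i - ds i) hirr hnass hbP hbD
    intro i
    have h2 : cs i = (cs i - ds i) + ds i := by abel
    rw [h2]
    exact hDadd (hfin i).1 ⟨kds i, hkds i, hkdu i⟩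
end

section
/- Let Λ be a set of pairwise non-*-associate irreducibles of R. For each λ ∈ Λ let (x_{λ,i})_{i ∈ ℕ} be a sequence of elements of C_λ such that for every finitely supported family of integers (r_i), if the linear combination Σ_i r_i·x_{λ,i} lies in C^λ then r_i = 0 for all i. Let S be the subgroup of C generated by Δ together with all the elements x_{λ,i} (λ ∈ Λ, i ∈ ℕ). Then: (1) for each λ ∈ Λ, S ∩ C_λ equals the subgroup generated by Δ and {x_{λ,i} : i ∈ ℕ}; (2) for each λ ∈ Λ, the quotient (S ∩ C_λ)/Δ is free abelian with basis the classes of the x_{λ,i}, and the natural map (S ∩ C_λ)/Δ → S/(S ∩ C^λ) is an isomorphism; (3) the natural map ⊕_{λ∈Λ} (S ∩ C_λ)/Δ → S/Δ induced by the inclusions is an isomorphism; (4) the natural map S/Δ → ⊕_{λ∈Λ} S/(S ∩ C^λ) induced by the projections is an isomorphism. -/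
/-- The subgroup `S ≤ C` generated by `Δ` together with the elements `x l i`
for `l ∈ Λ` and `i ∈ ℕ`. -/
def Sgen {K C R : Type*} [AddCommMonoid K] [AddCommGroup C] [CommRing R]
    (π : K →+ C) (χ : K → R) (Λ : Set R) (x : R → ℕ → C) : AddSubgroup C :=
  AddSubgroup.closure (DeltaSet π χ ∪ {c | ∃ l ∈ Λ, ∃ i : ℕ, c = x l i})


section Aux9
variable {K C R : Type*} [AddCommMonoid K] [AddCommGroup C] [CommRing R]
  [IsDomain R] [UniqueFactorizationMonoid R]
variable (π : K →+ C) (σ : R →+* R) (χ : K → R)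

set_option linter.unusedSectionVars false

lemma aux9_chi0 (hχ : ∀ k, χ k ≠ 0)
    (hD2 : ∀ k k', Associated (χ (k + k')) (χ k * χ k')) : IsUnit (χ (0 : K)) := by
  have h := hD2 0 0
  rw [add_zero] at h
  obtain ⟨u, hu⟩ := h
  have hc : (u : R) = χ 0 := mul_left_cancel₀ (hχ 0) hu
  exact hc ▸ u.isUnit

lemma aux9_zero_mem_delta (hχ : ∀ k, χ k ≠ 0)
    (hD2 : ∀ k k', Associated (χ (k + k')) (χ k * χ k')) : (0 : C) ∈ DeltaSet π χ :=
  ⟨0, map_zero π, aux9_chi0 χ hχ hD2⟩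

def deltaGrp (hχ : ∀ k, χ k ≠ 0)
    (hD2 : ∀ k k', Associated (χ (k + k')) (χ k * χ k'))
    (hD3 : ∀ k, ∃ j, π j = -π k ∧ Associated (χ j) (χ k)) : AddSubgroup C where
  carrier := DeltaSet π χ
  zero_mem' := aux9_zero_mem_delta π χ hχ hD2
  add_mem' := by
    rintro a b ⟨k, hk, hu⟩ ⟨k', hk', hu'⟩
    exact ⟨k + k', by rw [map_add, hk, hk'], (hD2 k k').symm.isUnit (hu.mul hu')⟩
  neg_mem' := by
    rintro a ⟨k, hk, hu⟩
    obtain ⟨j, hj, ha⟩ := hD3 k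
    exact ⟨j, by rw [hj, hk], ha.symm.isUnit hu⟩

def cprimGrp (l : R) (hχ : ∀ k, χ k ≠ 0)
    (hD2 : ∀ k k', Associated (χ (k + k')) (χ k * χ k'))
    (hD3 : ∀ k, ∃ j, π j = -π k ∧ Associated (χ j) (χ k)) : AddSubgroup C where
  carrier := Cprim σ π χ l
  zero_mem' := ⟨0, map_zero π, 0, by
    rw [pow_zero]; exact associated_one_iff_isUnit.mpr (aux9_chi0 χ hχ hD2)⟩
  add_mem' := by
    rintro a b ⟨k, hk, n, ha⟩ ⟨k', hk', n', ha'⟩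
    refine ⟨k + k', by rw [map_add, hk, hk'], n + n', ?_⟩
    rw [pow_add]
    exact (hD2 k k').trans (ha.mul_mul ha')
  neg_mem' := by
    rintro a ⟨k, hk, n, ha⟩
    obtain ⟨j, hj, haj⟩ := hD3 k
    exact ⟨j, by rw [hj, hk], n, haj.trans ha⟩

def ccoGrp (l : R) (hl : Prime l) (hχ : ∀ k, χ k ≠ 0)
    (hD2 : ∀ k k', Associated (χ (k + k')) (χ k * χ k'))
    (hD3 : ∀ k, ∃ j, π j = -π k ∧ Associated (χ j) (χ k)) : AddSubgroup C where
  carrier := Cco π χ l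
  zero_mem' := ⟨0, map_zero π, fun hd =>
    hl.not_unit (isUnit_of_dvd_unit hd (aux9_chi0 χ hχ hD2))⟩
  add_mem' := by
    rintro a b ⟨k, hk, hu⟩ ⟨k', hk', hu'⟩
    refine ⟨k + k', by rw [map_add, hk, hk'], fun hd => ?_⟩
    rcases hl.dvd_mul.mp (hd.trans (hD2 k k').dvd) with h | h
    exacts [hu h, hu' h]
  neg_mem' := by
    rintro a ⟨k, hk, hu⟩
    obtain ⟨j, hj, ha⟩ := hD3 k
    exact ⟨j, by rw [hj, hk], fun hd => hu (hd.trans ha.dvd)⟩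

lemma aux9_delta_subset_cprim (l : R) : DeltaSet π χ ⊆ Cprim σ π χ l := by
  rintro c ⟨k, hk, hu⟩
  exact ⟨k, hk, 0, by rw [pow_zero]; exact associated_one_iff_isUnit.mpr hu⟩

lemma aux9_delta_subset_cco {l : R} (hl : ¬ IsUnit l) : DeltaSet π χ ⊆ Cco π χ l := by
  rintro c ⟨k, hk, hu⟩
  exact ⟨k, hk, fun hd => hl (isUnit_of_dvd_unit hd hu)⟩

lemma aux9_sigma_irr (hσ : ∀ r, σ (σ r) = r) {m : R} (hm : Irreducible m) :
    Irreducible (σ m) := by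
  let e : R ≃+* R := RingEquiv.ofRingHom σ σ (RingHom.ext hσ) (RingHom.ext hσ)
  have : Irreducible ((e : R ≃* R) m) := (MulEquiv.irreducible_iff (e : R ≃* R)).mpr hm
  exact this

lemma aux9_cprim_subset_cco (hσ : ∀ r, σ (σ r) = r) {l m : R}
    (hl : Irreducible l) (hm : Irreducible m) (hnot : ¬ StarAssoc σ l m) :
    Cprim σ π χ m ⊆ Cco π χ l := by
  rintro c ⟨k, hk, n, ha⟩
  refine ⟨k, hk, fun hd => ?_⟩
  have hlp : Prime l := UniqueFactorizationMonoid.irreducible_iff_prime.mp hl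
  have hdS : l ∣ Sdual σ m := hlp.dvd_of_dvd_pow (hd.trans ha.dvd)
  apply hnot
  unfold Sdual at hdS
  split_ifs at hdS with h
  · exact Or.inl (hl.associated_of_dvd hm hdS)
  · rcases hlp.dvd_mul.mp hdS with h' | h'
    · exact Or.inl (hl.associated_of_dvd hm h')
    · exact Or.inr (hl.associated_of_dvd (aux9_sigma_irr σ hσ hm) h')

noncomputable def Ymap (x : ℕ → C) : (ℕ →₀ ℤ) →+ C :=
  Finsupp.liftAddHom fun i => zmultiplesHom C (x i)

lemma Ymap_apply (x : ℕ → C) (r : ℕ →₀ ℤ) :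
    Ymap x r = r.sum fun i ri => ri • x i := by
  rw [Ymap, Finsupp.liftAddHom_apply]
  rfl

lemma Ymap_mem {x : ℕ → C} {H : AddSubgroup C} (hxH : ∀ i, x i ∈ H) (r : ℕ →₀ ℤ) :
    Ymap x r ∈ H := by
  rw [Ymap_apply]
  exact AddSubgroup.sum_mem _ fun i _ => AddSubgroup.zsmul_mem _ (hxH i) _

lemma aux9_CF (hχ : ∀ k, χ k ≠ 0)
    (hD2 : ∀ k k', Associated (χ (k + k')) (χ k * χ k'))
    (hD3 : ∀ k, ∃ j, π j = -π k ∧ Associated (χ j) (χ k))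
    (Λ : Set R) (x : R → ℕ → C) :
    ∀ c ∈ Sgen π χ Λ x, ∃ d ∈ DeltaSet π χ, ∃ F : Finset R, ↑F ⊆ Λ ∧
      ∃ r : R → (ℕ →₀ ℤ), c = d + ∑ m ∈ F, Ymap (x m) (r m) := by
  classical
  intro c hc
  induction hc using AddSubgroup.closure_induction with
  | mem g hg =>
    rcases hg with hg | ⟨m, hm, i, rfl⟩
    · exact ⟨g, hg, ∅, by simp, fun _ => 0, by simp⟩
    · refine ⟨0, aux9_zero_mem_delta π χ hχ hD2, {m}, by simpa using hm,
        fun _ => Finsupp.single i 1, ?_⟩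
      rw [Finset.sum_singleton, Ymap_apply, Finsupp.sum_single_index] <;>
        simp
  | zero =>
    exact ⟨0, aux9_zero_mem_delta π χ hχ hD2, ∅, by simp, fun _ => 0, by simp⟩
  | add a b ha hb iha ihb =>
    obtain ⟨d, hd, F, hF, r, rfl⟩ := iha
    obtain ⟨d', hd', F', hF', r', rfl⟩ := ihb
    refine ⟨d + d', (deltaGrp π χ hχ hD2 hD3).add_mem hd hd', F ∪ F',
      by simp [Finset.coe_union, Set.union_subset_iff, hF, hF'],
      fun m => (if m ∈ F then r m else 0) + (if m ∈ F' then r' m else 0), ?_⟩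
    have h1 : ∑ m ∈ F ∪ F', Ymap (x m) (if m ∈ F then r m else 0)
        = ∑ m ∈ F, Ymap (x m) (r m) := by
      rw [← Finset.sum_subset Finset.subset_union_left]
      · exact Finset.sum_congr rfl fun m hm => by rw [if_pos hm]
      · intro m _ hm
        rw [if_neg hm, map_zero]
    have h2 : ∑ m ∈ F ∪ F', Ymap (x m) (if m ∈ F' then r' m else 0)
        = ∑ m ∈ F', Ymap (x m) (r' m) := by
      rw [← Finset.sum_subset Finset.subset_union_right]
      · exact Finset.sum_congr rfl fun m hm => by rw [if_pos hm]
      · intro m _ hm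
        rw [if_neg hm, map_zero]
    simp only [map_add, Finset.sum_add_distrib, h1, h2]
    abel
  | neg a ha iha =>
    obtain ⟨d, hd, F, hF, r, rfl⟩ := iha
    refine ⟨-d, (deltaGrp π χ hχ hD2 hD3).neg_mem hd, F, hF, fun m => -(r m), ?_⟩
    simp only [map_neg, Finset.sum_neg_distrib]
    abel

lemma aux9_comp_zero
    (hσ : ∀ r, σ (σ r) = r) (hχ : ∀ k, χ k ≠ 0)
    (hD2 : ∀ k k', Associated (χ (k + k')) (χ k * χ k'))
    (hD3 : ∀ k, ∃ j, π j = -π k ∧ Associated (χ j) (χ k))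
    (Λ : Set R) (hΛirr : ∀ l ∈ Λ, Irreducible l)
    (hΛ : ∀ l ∈ Λ, ∀ m ∈ Λ, l ≠ m → ¬ StarAssoc σ l m)
    (x : R → ℕ → C)
    (hind : ∀ l ∈ Λ, ∀ r : ℕ →₀ ℤ,
      (r.sum fun i ri => ri • x l i) ∈ Cco π χ l → r = 0)
    (hx : ∀ l ∈ Λ, ∀ i : ℕ, x l i ∈ Cprim σ π χ l)
    {l : R} (hlΛ : l ∈ Λ)
    {d : C} (hd : d ∈ DeltaSet π χ) {F : Finset R} (hF : ↑F ⊆ Λ)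
    (r : R → (ℕ →₀ ℤ)) (hcco : d + ∑ m ∈ F, Ymap (x m) (r m) ∈ Cco π χ l)
    (hlF : l ∈ F) : r l = 0 := by
  classical
  have hlp : Prime l := UniqueFactorizationMonoid.irreducible_iff_prime.mp (hΛirr l hlΛ)
  set G := ccoGrp π χ l hlp hχ hD2 hD3 with hG
  have key : Ymap (x l) (r l) ∈ G := by
    have heq : Ymap (x l) (r l)
        = (d + ∑ m ∈ F, Ymap (x m) (r m)) - d - ∑ m ∈ F.erase l, Ymap (x m) (r m) := by
      rw [← Finset.add_sum_erase F _ hlF]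
      abel
    rw [heq]
    refine G.sub_mem (G.sub_mem hcco (aux9_delta_subset_cco π χ hlp.not_unit hd)) ?_
    refine AddSubgroup.sum_mem _ fun m hm => ?_
    have hmΛ : m ∈ Λ := hF (Finset.mem_of_mem_erase hm)
    have hml : l ≠ m := fun h => (Finset.ne_of_mem_erase hm) h.symm
    have : Ymap (x m) (r m) ∈ Cprim σ π χ m :=
      Ymap_mem (H := cprimGrp π σ χ m hχ hD2 hD3) (fun i => hx m hmΛ i) (r m)
    exact aux9_cprim_subset_cco π σ χ hσ (hΛirr l hlΛ) (hΛirr m hmΛ)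
      (hΛ l hlΛ m hmΛ hml) this
  apply hind l hlΛ
  rw [← Ymap_apply]
  exact key

lemma aux9_CFprim
    (hσ : ∀ r, σ (σ r) = r) (hχ : ∀ k, χ k ≠ 0)
    (hD2 : ∀ k k', Associated (χ (k + k')) (χ k * χ k'))
    (hD3 : ∀ k, ∃ j, π j = -π k ∧ Associated (χ j) (χ k))
    (Λ : Set R) (hΛirr : ∀ l ∈ Λ, Irreducible l)
    (hΛ : ∀ l ∈ Λ, ∀ m ∈ Λ, l ≠ m → ¬ StarAssoc σ l m)
    (x : R → ℕ → C)
    (hind : ∀ l ∈ Λ, ∀ r : ℕ →₀ ℤ,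
      (r.sum fun i ri => ri • x l i) ∈ Cco π χ l → r = 0)
    (hx : ∀ l ∈ Λ, ∀ i : ℕ, x l i ∈ Cprim σ π χ l)
    {l : R} (hlΛ : l ∈ Λ) {c : C}
    (hcS : c ∈ Sgen π χ Λ x) (hcP : c ∈ Cprim σ π χ l) :
    ∃ d ∈ DeltaSet π χ, ∃ r : ℕ →₀ ℤ, c = d + Ymap (x l) r := by
  classical
  obtain ⟨d, hd, F, hF, r, hc⟩ := aux9_CF π χ hχ hD2 hD3 Λ x c hcS
  have hz : ∀ m ∈ F, m ≠ l → r m = 0 := by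
    intro m hm hml
    refine aux9_comp_zero π σ χ hσ hχ hD2 hD3 Λ hΛirr hΛ x hind hx (hF hm) hd hF r ?_ hm
    rw [← hc]
    exact aux9_cprim_subset_cco π σ χ hσ (hΛirr m (hF hm)) (hΛirr l hlΛ)
      (hΛ m (hF hm) l hlΛ hml) hcP
  by_cases hlF : l ∈ F
  · refine ⟨d, hd, r l, ?_⟩
    rw [hc, ← Finset.add_sum_erase F _ hlF]
    have h0 : ∑ m ∈ F.erase l, Ymap (x m) (r m) = 0 :=
      Finset.sum_eq_zero fun m hm => by
        rw [hz m (Finset.mem_of_mem_erase hm) (Finset.ne_of_mem_erase hm), map_zero]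
    rw [h0, add_zero]
  · refine ⟨d, hd, 0, ?_⟩
    rw [hc, map_zero]
    have h0 : ∑ m ∈ F, Ymap (x m) (r m) = 0 :=
      Finset.sum_eq_zero fun m hm => by
        rw [hz m hm (fun h => hlF (h ▸ hm)), map_zero]
    rw [h0]

lemma aux9_P
    (hσ : ∀ r, σ (σ r) = r) (hχ : ∀ k, χ k ≠ 0)
    (hD2 : ∀ k k', Associated (χ (k + k')) (χ k * χ k'))
    (hD3 : ∀ k, ∃ j, π j = -π k ∧ Associated (χ j) (χ k))
    (Λ : Set R) (hΛirr : ∀ l ∈ Λ, Irreducible l)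
    (hΛ : ∀ l ∈ Λ, ∀ m ∈ Λ, l ≠ m → ¬ StarAssoc σ l m)
    (x : R → ℕ → C)
    (hind : ∀ l ∈ Λ, ∀ r : ℕ →₀ ℤ,
      (r.sum fun i ri => ri • x l i) ∈ Cco π χ l → r = 0)
    (hx : ∀ l ∈ Λ, ∀ i : ℕ, x l i ∈ Cprim σ π χ l)
    {l : R} (hlΛ : l ∈ Λ) {c : C}
    (hcS : c ∈ Sgen π χ Λ x) (hcP : c ∈ Cprim σ π χ l) (hcc : c ∈ Cco π χ l) :
    c ∈ DeltaSet π χ := by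
  obtain ⟨d, hd, r, hc⟩ := aux9_CFprim π σ χ hσ hχ hD2 hD3 Λ hΛirr hΛ x hind hx hlΛ hcS hcP
  have hlp : Prime l := UniqueFactorizationMonoid.irreducible_iff_prime.mp (hΛirr l hlΛ)
  have hmem : Ymap (x l) r ∈ ccoGrp π χ l hlp hχ hD2 hD3 := by
    have heq : Ymap (x l) r = c - d := by rw [hc]; abel
    rw [heq]
    exact AddSubgroup.sub_mem _ hcc (aux9_delta_subset_cco π χ hlp.not_unit hd)
  have hr0 : r = 0 := hind l hlΛ r (by rw [← Ymap_apply]; exact hmem)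
  rw [hc, hr0, map_zero, add_zero]
  exact hd

lemma aux9_decomp
    (hσ : ∀ r, σ (σ r) = r) (hχ : ∀ k, χ k ≠ 0)
    (hD2 : ∀ k k', Associated (χ (k + k')) (χ k * χ k'))
    (hD3 : ∀ k, ∃ j, π j = -π k ∧ Associated (χ j) (χ k))
    (Λ : Set R) (hΛirr : ∀ l ∈ Λ, Irreducible l)
    (hΛ : ∀ l ∈ Λ, ∀ m ∈ Λ, l ≠ m → ¬ StarAssoc σ l m)
    (x : R → ℕ → C)
    (hx : ∀ l ∈ Λ, ∀ i : ℕ, x l i ∈ Cprim σ π χ l)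
    {l : R} (hlΛ : l ∈ Λ) {c : C} (hcS : c ∈ Sgen π χ Λ x) :
    ∃ D, D ∈ Sgen π χ Λ x ∧ D ∈ Cprim σ π χ l ∧ c - D ∈ Cco π χ l := by
  classical
  obtain ⟨d, hd, F, hF, r, hc⟩ := aux9_CF π χ hχ hD2 hD3 Λ x c hcS
  have hlp : Prime l := UniqueFactorizationMonoid.irreducible_iff_prime.mp (hΛirr l hlΛ)
  refine ⟨d + Ymap (x l) (if l ∈ F then r l else 0), ?_, ?_, ?_⟩
  · refine (Sgen π χ Λ x).add_mem (AddSubgroup.subset_closure (Or.inl hd)) ?_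
    refine Ymap_mem (H := Sgen π χ Λ x) (fun i => ?_) _
    exact AddSubgroup.subset_closure (Or.inr ⟨l, hlΛ, i, rfl⟩)
  · exact (cprimGrp π σ χ l hχ hD2 hD3).add_mem
      (aux9_delta_subset_cprim π σ χ l hd)
      (Ymap_mem (H := cprimGrp π σ χ l hχ hD2 hD3) (hx l hlΛ) _)
  · have heq : c - (d + Ymap (x l) (if l ∈ F then r l else 0))
        = ∑ m ∈ F.erase l, Ymap (x m) (r m) := by
      by_cases hlF : l ∈ F
      · rw [hc, if_pos hlF, ← Finset.add_sum_erase F _ hlF]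
        abel
      · rw [hc, if_neg hlF, map_zero, Finset.erase_eq_of_notMem hlF]
        abel
    rw [heq]
    refine AddSubgroup.sum_mem (ccoGrp π χ l hlp hχ hD2 hD3) fun m hm => ?_
    have hmΛ : m ∈ Λ := hF (Finset.mem_of_mem_erase hm)
    have hml : l ≠ m := fun h => (Finset.ne_of_mem_erase hm) h.symm
    exact aux9_cprim_subset_cco π σ χ hσ (hΛirr l hlΛ) (hΛirr m hmΛ)
      (hΛ l hlΛ m hmΛ hml)
      (Ymap_mem (H := cprimGrp π σ χ m hχ hD2 hD3) (hx m hmΛ) (r m))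

end Aux9

/-- Given a set `Λ` of pairwise non-`*`-associate irreducibles and, for each `λ ∈ Λ`,
a sequence `x λ i ∈ C_λ` whose nontrivial integral linear combinations never lie in
`C^λ`, the subgroup `S` generated by `Δ` and the `x λ i` satisfies:
(1) `S ∩ C_λ` is generated by `Δ` and the `x λ i`;
(2) `(S ∩ C_λ)/Δ` is free abelian on the classes of the `x λ i`, and the natural map
`(S ∩ C_λ)/Δ → S/(S ∩ C^λ)` is an isomorphism;
(3) `⊕_{λ∈Λ} (S ∩ C_λ)/Δ → S/Δ` is an isomorphism;
(4) `S/Δ → ⊕_{λ∈Λ} S/(S ∩ C^λ)` is an isomorphism. -/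
theorem statement9
    {K C R : Type*} [AddCommMonoid K] [AddCommGroup C]
    [CommRing R] [IsDomain R] [UniqueFactorizationMonoid R]
    (π : K →+ C) (hπ : Function.Surjective π)
    (σ : R →+* R) (hσ : ∀ r, σ (σ r) = r)
    (χ : K → R) (hχ : ∀ k, χ k ≠ 0)
    (hD1 : ∀ k, Associated (σ (χ k)) (χ k))
    (hD2 : ∀ k k', Associated (χ (k + k')) (χ k * χ k'))
    (hD3 : ∀ k, ∃ j, π j = -π k ∧ Associated (χ j) (χ k))
    (Λ : Set R) (hΛirr : ∀ l ∈ Λ, Irreducible l)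
    (hΛ : ∀ l ∈ Λ, ∀ m ∈ Λ, l ≠ m → ¬ StarAssoc σ l m)
    (x : R → ℕ → C)
    (hx : ∀ l ∈ Λ, ∀ i : ℕ, x l i ∈ Cprim σ π χ l)
    (hind : ∀ l ∈ Λ, ∀ r : ℕ →₀ ℤ,
      (r.sum fun i ri => ri • x l i) ∈ Cco π χ l → r = 0) :
    -- (1) `S ∩ C_λ` is the subgroup generated by `Δ` and the `x λ i`
    (∀ l ∈ Λ, (Sgen π χ Λ x : Set C) ∩ Cprim σ π χ l
      = (AddSubgroup.closure (DeltaSet π χ ∪ Set.range (x l)) : Set C)) ∧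
    -- (2) `(S ∩ C_λ)/Δ` is free abelian with basis the classes of the `x λ i`,
    --     and `(S ∩ C_λ)/Δ → S/(S ∩ C^λ)` is an isomorphism
    (∀ l ∈ Λ,
      (∀ c ∈ (Sgen π χ Λ x : Set C) ∩ Cprim σ π χ l, ∃ r : ℕ →₀ ℤ,
        c - (r.sum fun i ri => ri • x l i) ∈ DeltaSet π χ) ∧
      (∀ r : ℕ →₀ ℤ, (r.sum fun i ri => ri • x l i) ∈ DeltaSet π χ → r = 0) ∧
      (∀ c ∈ (Sgen π χ Λ x : Set C) ∩ Cprim σ π χ l,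
        c ∈ Cco π χ l → c ∈ DeltaSet π χ) ∧
      (∀ c ∈ (Sgen π χ Λ x : Set C),
        ∃ d ∈ (Sgen π χ Λ x : Set C) ∩ Cprim σ π χ l, c - d ∈ Cco π χ l)) ∧
    -- (3) `⊕_{λ∈Λ} (S ∩ C_λ)/Δ → S/Δ` is an isomorphism
    ((∀ c ∈ (Sgen π χ Λ x : Set C), ∃ d ∈ DeltaSet π χ, ∃ n : ℕ,
        ∃ lam : Fin n → R, ∃ cs : Fin n → C,
        (∀ i, lam i ∈ Λ) ∧ (∀ i j, i ≠ j → lam i ≠ lam j) ∧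
        (∀ i, cs i ∈ (Sgen π χ Λ x : Set C) ∩ Cprim σ π χ (lam i)) ∧
        c = d + ∑ i, cs i) ∧
     (∀ (n : ℕ) (lam : Fin n → R) (cs : Fin n → C),
        (∀ i, lam i ∈ Λ) → (∀ i j, i ≠ j → lam i ≠ lam j) →
        (∀ i, cs i ∈ (Sgen π χ Λ x : Set C) ∩ Cprim σ π χ (lam i)) →
        (∑ i, cs i) ∈ DeltaSet π χ → ∀ i, cs i ∈ DeltaSet π χ)) ∧
    -- (4) `S/Δ → ⊕_{λ∈Λ} S/(S ∩ C^λ)` is an isomorphism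
    ((∀ c ∈ (Sgen π χ Λ x : Set C), (∀ l ∈ Λ, c ∈ Cco π χ l) → c ∈ DeltaSet π χ) ∧
     (∀ F : Finset R, ↑F ⊆ Λ → ∀ d : R → C, (∀ l ∈ F, d l ∈ Sgen π χ Λ x) →
        ∃ c ∈ (Sgen π χ Λ x : Set C),
          (∀ l ∈ F, c - d l ∈ Cco π χ l) ∧
          ∀ l ∈ Λ, l ∉ F → c ∈ Cco π χ l)) := by
  classical
  have P1 : ∀ l ∈ Λ, (Sgen π χ Λ x : Set C) ∩ Cprim σ π χ l
      = (AddSubgroup.closure (DeltaSet π χ ∪ Set.range (x l)) : Set C) := by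
    intro l hlΛ
    ext c
    simp only [Set.mem_inter_iff, SetLike.mem_coe]
    constructor
    · rintro ⟨hcS, hcP⟩
      obtain ⟨d, hd, r, hc⟩ :=
        aux9_CFprim π σ χ hσ hχ hD2 hD3 Λ hΛirr hΛ x hind hx hlΛ hcS hcP
      rw [hc]
      refine (AddSubgroup.closure (DeltaSet π χ ∪ Set.range (x l))).add_mem
        (AddSubgroup.subset_closure (Or.inl hd)) ?_
      exact Ymap_mem (H := AddSubgroup.closure (DeltaSet π χ ∪ Set.range (x l)))
        (fun i => AddSubgroup.subset_closure (Or.inr ⟨i, rfl⟩)) r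
    · intro hc
      constructor
      · refine (AddSubgroup.closure_le (Sgen π χ Λ x)).mpr ?_ hc
        rintro g (hg | ⟨i, rfl⟩)
        · exact AddSubgroup.subset_closure (Or.inl hg)
        · exact AddSubgroup.subset_closure (Or.inr ⟨l, hlΛ, i, rfl⟩)
      · refine (AddSubgroup.closure_le (cprimGrp π σ χ l hχ hD2 hD3)).mpr ?_ hc
        rintro g (hg | ⟨i, rfl⟩)
        · exact aux9_delta_subset_cprim π σ χ l hg
        · exact hx l hlΛ i
  refine ⟨P1, ?_, ⟨?_, ?_⟩, ?_, ?_⟩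
  · -- part (2)
    intro l hlΛ
    have hlp : Prime l := UniqueFactorizationMonoid.irreducible_iff_prime.mp (hΛirr l hlΛ)
    refine ⟨?_, ?_, ?_, ?_⟩
    · rintro c ⟨hcS, hcP⟩
      obtain ⟨d, hd, r, hc⟩ :=
        aux9_CFprim π σ χ hσ hχ hD2 hD3 Λ hΛirr hΛ x hind hx hlΛ hcS hcP
      refine ⟨r, ?_⟩
      rw [← Ymap_apply]
      have : c - Ymap (x l) r = d := by rw [hc]; abel
      rw [this]
      exact hd
    · intro r hr
      exact hind l hlΛ r (aux9_delta_subset_cco π χ hlp.not_unit hr)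
    · rintro c ⟨hcS, hcP⟩ hcc
      exact aux9_P π σ χ hσ hχ hD2 hD3 Λ hΛirr hΛ x hind hx hlΛ hcS hcP hcc
    · intro c hcS
      obtain ⟨D, h1, h2, h3⟩ :=
        aux9_decomp π σ χ hσ hχ hD2 hD3 Λ hΛirr hΛ x hx hlΛ hcS
      exact ⟨D, ⟨h1, h2⟩, h3⟩
  · -- part (3), existence
    intro c hcS
    obtain ⟨d, hd, F, hF, r, hc⟩ := aux9_CF π χ hχ hD2 hD3 Λ x c hcS
    refine ⟨d, hd, F.card, fun i => ((F.equivFin.symm i : F) : R),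
      fun i => Ymap (x ((F.equivFin.symm i : F) : R)) (r ((F.equivFin.symm i : F) : R)),
      ?_, ?_, ?_, ?_⟩
    · intro i
      exact hF (F.equivFin.symm i).2
    · intro i j hij h
      exact hij (F.equivFin.symm.injective (Subtype.ext h))
    · intro i
      constructor
      · refine Ymap_mem (H := Sgen π χ Λ x) (fun i' => ?_) _
        exact AddSubgroup.subset_closure
          (Or.inr ⟨_, hF (F.equivFin.symm i).2, i', rfl⟩)
      · exact Ymap_mem (H := cprimGrp π σ χ _ hχ hD2 hD3)
          (hx _ (hF (F.equivFin.symm i).2)) _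
    · rw [hc]
      congr 1
      rw [← Finset.sum_coe_sort F (fun m => Ymap (x m) (r m))]
      exact (Equiv.sum_comp F.equivFin.symm
        (fun a : F => Ymap (x (a : R)) (r (a : R)))).symm
  · -- part (3), independence
    intro n lam cs hlam hinj hcs hsum i0
    have hlp : Prime (lam i0) :=
      UniqueFactorizationMonoid.irreducible_iff_prime.mp (hΛirr _ (hlam i0))
    have hl : cs i0 ∈ Cco π χ (lam i0) := by
      have heq : cs i0 = (∑ i, cs i) - ∑ i ∈ Finset.univ.erase i0, cs i := by
        rw [← Finset.add_sum_erase _ cs (Finset.mem_univ i0)]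
        abel
      rw [heq]
      refine (ccoGrp π χ (lam i0) hlp hχ hD2 hD3).sub_mem
        (aux9_delta_subset_cco π χ hlp.not_unit hsum) ?_
      refine AddSubgroup.sum_mem _ fun i hi => ?_
      have hii0 : i0 ≠ i := (Finset.ne_of_mem_erase hi).symm
      exact aux9_cprim_subset_cco π σ χ hσ (hΛirr _ (hlam i0)) (hΛirr _ (hlam i))
        (hΛ _ (hlam i0) _ (hlam i) (hinj i0 i hii0)) (hcs i).2
    exact aux9_P π σ χ hσ hχ hD2 hD3 Λ hΛirr hΛ x hind hx (hlam i0)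
      (hcs i0).1 (hcs i0).2 hl
  · -- part (4), injectivity
    intro c hcS hcc
    obtain ⟨d, hd, F, hF, r, hc⟩ := aux9_CF π χ hχ hD2 hD3 Λ x c hcS
    have hz : ∀ m ∈ F, r m = 0 := fun m hm =>
      aux9_comp_zero π σ χ hσ hχ hD2 hD3 Λ hΛirr hΛ x hind hx (hF hm) hd hF r
        (hc ▸ hcc m (hF hm)) hm
    rw [hc, Finset.sum_eq_zero (fun m hm => by rw [hz m hm, map_zero]), add_zero]
    exact hd
  · -- part (4), surjectivity
    intro F hF d hd
    have key : ∀ l, l ∈ F → ∃ D, D ∈ Sgen π χ Λ x ∧ D ∈ Cprim σ π χ l ∧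
        d l - D ∈ Cco π χ l := fun l hl =>
      aux9_decomp π σ χ hσ hχ hD2 hD3 Λ hΛirr hΛ x hx (hF hl) (hd l hl)
    choose D hD1 hD2' hD3' using key
    refine ⟨∑ a ∈ F.attach, D a a.2, ?_, ?_, ?_⟩
    · exact AddSubgroup.sum_mem _ fun a _ => hD1 a a.2
    · intro l hl
      have hlΛ : l ∈ Λ := hF hl
      have hlp : Prime l := UniqueFactorizationMonoid.irreducible_iff_prime.mp (hΛirr l hlΛ)
      have heq : (∑ a ∈ F.attach, D a a.2) - d l
          = -(d l - D l hl) + ∑ a ∈ F.attach.erase ⟨l, hl⟩, D a a.2 := by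
        rw [← Finset.add_sum_erase F.attach _ (Finset.mem_attach F ⟨l, hl⟩)]
        abel
      rw [heq]
      refine (ccoGrp π χ l hlp hχ hD2 hD3).add_mem
        ((ccoGrp π χ l hlp hχ hD2 hD3).neg_mem (hD3' l hl)) ?_
      refine AddSubgroup.sum_mem _ fun a ha => ?_
      have hml : l ≠ (a : R) := by
        intro h
        exact Finset.ne_of_mem_erase ha (Subtype.ext h.symm)
      exact aux9_cprim_subset_cco π σ χ hσ (hΛirr l hlΛ) (hΛirr _ (hF a.2))
        (hΛ l hlΛ _ (hF a.2) hml) (hD2' a a.2)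
    · intro l hlΛ hlF
      have hlp : Prime l := UniqueFactorizationMonoid.irreducible_iff_prime.mp (hΛirr l hlΛ)
      refine AddSubgroup.sum_mem (ccoGrp π χ l hlp hχ hD2 hD3) fun a _ => ?_
      have hml : l ≠ (a : R) := fun h => hlF (h ▸ a.2)
      exact aux9_cprim_subset_cco π σ χ hσ (hΛirr l hlΛ) (hΛirr _ (hF a.2))
        (hΛ l hlΛ _ (hF a.2) hml) (hD2' a a.2)
end

section
/- Let R be a unique factorization domain with a ring involution *, and let λ, μ, ν be pairwise non-*-associate irreducibles of R, each an associate of its own image under * (self-dual). Let K = ℕ⁴ with componentwise addition, let π : ℕ⁴ → ℤ be π(a,b,c,d) = a − b + c − d, and let χ(a,b,c,d) = λ^{a+b}·(μν)^{c+d}. Then: (i) if χ(v) is a unit of R then v = 0 (so the subgroup Δ of ℤ is trivial); (ii) for every n ∈ ℤ there exists v ∈ ℕ⁴ with π(v) = n and χ(v) an associate of a power of λ (so C_λ = ℤ and Φ_L is an isomorphism); (iii) for every irreducible ζ of R not *-associate to λ, if χ(v) is an associate of S(ζ)^k for some k ≥ 0 then v = 0 (so C_ζ is trivial); (iv) for every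 irreducible ζ of R there exists v ∈ ℕ⁴ with π(v) = 1 and ζ not dividing χ(v) (so 1 ∈ C^ζ for all ζ, and hence Φ_R is not injective). -/
lemma assoc_map {R : Type*} [CommRing R] (σ : R →+* R) {a b : R}
    (h : Associated a b) : Associated (σ a) (σ b) := by
  obtain ⟨u, hu⟩ := h
  exact ⟨(u.isUnit.map σ).unit, by rw [IsUnit.unit_spec, ← map_mul, hu]⟩

lemma irr_map {R : Type*} [CommRing R] (σ : R →+* R) (hσ : ∀ r, σ (σ r) = r)
    {a : R} (h : Irreducible a) : Irreducible (σ a) := by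
  constructor
  · intro hu
    exact h.not_isUnit (by have := hu.map σ; rwa [hσ] at this)
  · intro x y hxy
    have hx : a = σ x * σ y := by rw [← map_mul, ← hxy, hσ]
    rcases h.isUnit_or_isUnit hx with h1 | h1
    · left; have := h1.map σ; rwa [hσ] at this
    · right; have := h1.map σ; rwa [hσ] at this

/-- The paper's example showing that left primary decomposability does not imply
right primary decomposability: `K = ℕ⁴`, `C = ℤ`, `π(a,b,c,d) = a - b + c - d`,
`χ(a,b,c,d) = λ^{a+b}·(μν)^{c+d}` for pairwise non-`*`-associate self-dual
irreducibles `λ, μ, ν`. -/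
theorem statement10
    {R : Type*} [CommRing R] [IsDomain R] [UniqueFactorizationMonoid R]
    (σ : R →+* R) (hσ : ∀ r, σ (σ r) = r)
    (lam mu nu : R)
    (hlirr : Irreducible lam) (hmirr : Irreducible mu) (hnirr : Irreducible nu)
    (hlsd : Associated lam (σ lam)) (hmsd : Associated mu (σ mu))
    (hnsd : Associated nu (σ nu))
    (hlm : ¬ StarAssoc σ lam mu) (hln : ¬ StarAssoc σ lam nu)
    (hmn : ¬ StarAssoc σ mu nu)
    (pi : ℕ × ℕ × ℕ × ℕ → ℤ)
    (hpi : ∀ v : ℕ × ℕ × ℕ × ℕ,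
      pi v = (v.1 : ℤ) - (v.2.1 : ℤ) + (v.2.2.1 : ℤ) - (v.2.2.2 : ℤ))
    (chi : ℕ × ℕ × ℕ × ℕ → R)
    (hchi : ∀ v : ℕ × ℕ × ℕ × ℕ,
      chi v = lam ^ (v.1 + v.2.1) * (mu * nu) ^ (v.2.2.1 + v.2.2.2)) :
    -- (i) `Δ` is trivial
    (∀ v, IsUnit (chi v) → v = (0, 0, 0, 0)) ∧
    -- (ii) `C_λ = ℤ`
    (∀ n : ℤ, ∃ v, pi v = n ∧ ∃ k : ℕ, Associated (chi v) (lam ^ k)) ∧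
    -- (iii) `C_ζ` is trivial for every irreducible `ζ` not `*`-associate to `λ`
    (∀ ζ : R, Irreducible ζ → ¬ StarAssoc σ ζ lam →
      ∀ v, (∃ k : ℕ, Associated (chi v) (Sdual σ ζ ^ k)) → v = (0, 0, 0, 0)) ∧
    -- (iv) `1 ∈ C^ζ` for every irreducible `ζ`, so `Φ_R` is not injective
    (∀ ζ : R, Irreducible ζ → ∃ v, pi v = 1 ∧ ¬ ζ ∣ chi v) := by
  have hlp : Prime lam := UniqueFactorizationMonoid.irreducible_iff_prime.mp hlirr
  have hmp : Prime mu := UniqueFactorizationMonoid.irreducible_iff_prime.mp hmirr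
  have hnp : Prime nu := UniqueFactorizationMonoid.irreducible_iff_prime.mp hnirr
  refine ⟨?_, ?_, ?_, ?_⟩
  · -- (i)
    rintro ⟨a, b, c, d⟩ hv
    rw [hchi] at hv
    simp only at hv
    have h1 : IsUnit (lam ^ (a + b)) := isUnit_of_mul_isUnit_left hv
    have h2 : IsUnit ((mu * nu) ^ (c + d)) := isUnit_of_mul_isUnit_right hv
    have hab : a + b = 0 := by
      by_contra h
      exact hlirr.not_isUnit ((isUnit_pow_iff h).mp h1)
    have hcd : c + d = 0 := by
      by_contra h
      exact hmirr.not_isUnit (isUnit_of_mul_isUnit_left ((isUnit_pow_iff h).mp h2))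
    simp only [Prod.mk.injEq]
    omega
  · -- (ii)
    intro n
    rcases le_or_gt 0 n with h | h
    · refine ⟨(n.toNat, 0, 0, 0), by rw [hpi]; simp; omega, n.toNat, ?_⟩
      rw [hchi]; simp
    · refine ⟨(0, (-n).toNat, 0, 0), by rw [hpi]; simp; omega, (-n).toNat, ?_⟩
      rw [hchi]; simp
  · -- (iii)
    rintro ζ hζirr hζlam ⟨a, b, c, d⟩ ⟨k, hass⟩
    rw [hchi] at hass
    simp only at hass
    have hζσ : Irreducible (σ ζ) := irr_map σ hσ hζirr
    -- from p ∣ Sdual σ ζ ^ k, p prime irreducible, deduce star-assoc facts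
    have key : ∀ p : R, Irreducible p → p ∣ Sdual σ ζ ^ k →
        Associated p ζ ∨ Associated p (σ ζ) := by
      intro p hp hdvd
      have hpp : Prime p := UniqueFactorizationMonoid.irreducible_iff_prime.mp hp
      unfold Sdual at hdvd
      split_ifs at hdvd with hs
      · exact Or.inl (hp.associated_of_dvd hζirr (hpp.dvd_of_dvd_pow hdvd))
      · rcases hpp.dvd_mul.mp (hpp.dvd_of_dvd_pow hdvd) with h1 | h1
        · exact Or.inl (hp.associated_of_dvd hζirr h1)
        · exact Or.inr (hp.associated_of_dvd hζσ h1)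
    have hab : a + b = 0 := by
      by_contra h
      have hdvd : lam ∣ Sdual σ ζ ^ k :=
        dvd_trans (dvd_mul_of_dvd_left (dvd_pow_self lam h) _) hass.dvd
      rcases key lam hlirr hdvd with h1 | h1
      · exact hζlam (Or.inl h1.symm)
      · refine hζlam (Or.inr ?_)
        have := assoc_map σ h1
        rw [hσ] at this
        exact this.symm
    have hcd : c + d = 0 := by
      by_contra h
      have hmd : mu ∣ Sdual σ ζ ^ k :=
        dvd_trans (dvd_mul_of_dvd_right
          (dvd_trans (dvd_mul_right mu nu) (dvd_pow_self _ h)) _) hass.dvd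
      have hnd : nu ∣ Sdual σ ζ ^ k :=
        dvd_trans (dvd_mul_of_dvd_right
          (dvd_trans (dvd_mul_left nu mu) (dvd_pow_self _ h)) _) hass.dvd
      rcases key mu hmirr hmd with h1 | h1 <;> rcases key nu hnirr hnd with h2 | h2
      · exact hmn (Or.inl (h1.trans h2.symm))
      · refine hmn (Or.inr ?_)
        have := assoc_map σ h2
        rw [hσ] at this
        exact h1.trans this.symm
      · refine hmn (Or.inr ?_)
        have := assoc_map σ h2
        exact h1.trans this.symm
      · exact hmn (Or.inl (h1.trans h2.symm))
    simp only [Prod.mk.injEq]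
    omega
  · -- (iv)
    intro ζ hζ
    have hζp : Prime ζ := UniqueFactorizationMonoid.irreducible_iff_prime.mp hζ
    by_cases h : ζ ∣ lam
    · refine ⟨(0, 0, 1, 0), by rw [hpi]; simp, ?_⟩
      rw [hchi]
      norm_num
      intro hd
      have hζl : Associated ζ lam := hζ.associated_of_dvd hlirr h
      rcases hζp.dvd_mul.mp hd with h1 | h1
      · exact hlm (Or.inl (hζl.symm.trans (hζ.associated_of_dvd hmirr h1)))
      · exact hln (Or.inl (hζl.symm.trans (hζ.associated_of_dvd hnirr h1)))
    · refine ⟨(1, 0, 0, 0), by rw [hpi]; simp, ?_⟩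
      rw [hchi]
      norm_num
      exact h
end

section
/- Let R be a unique factorization domain with a ring involution *, and let λ, μ, ν be pairwise non-*-associate irreducibles of R, each an associate of its own image under * (self-dual). Let K = ℕ⁴ with componentwise addition, let π : ℕ⁴ → ℤ be π(a,b,c,d) = a − b + c − d, and let χ(a,b,c,d) = (λμ)^{a+b}·(μν)^{c+d}. Then: (i) for every irreducible ζ of R, if χ(v) is an associate of S(ζ)^k for some k ≥ 0 then v = 0 (so every C_ζ is trivial and Φ_L is not surjective, since ℤ ≠ 0 and Δ is trivial); (ii) if μ does not divide χ(v) then v = 0 (so C^μ is trivial); (iii) for every irreducible ζ of R not *-associate to μ and every n ∈ ℤ, there exists v ∈ ℕ⁴ with π(v) = n and ζ not dividing χ(v) (so C^ζ = ℤ for all such ζ, and hence Φ_R is an isomorphism). -/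
/-- The paper's example showing that right primary decomposability does not imply
left primary decomposability: `K = ℕ⁴`, `C = ℤ`, `π(a,b,c,d) = a - b + c - d`,
`χ(a,b,c,d) = (λμ)^{a+b}·(μν)^{c+d}` for pairwise non-`*`-associate self-dual
irreducibles `λ, μ, ν`. -/
theorem statement11
    {R : Type*} [CommRing R] [IsDomain R] [UniqueFactorizationMonoid R]
    (σ : R →+* R) (hσ : ∀ r, σ (σ r) = r)
    (lam mu nu : R)
    (hlirr : Irreducible lam) (hmirr : Irreducible mu) (hnirr : Irreducible nu)
    (hlsd : Associated lam (σ lam)) (hmsd : Associated mu (σ mu))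
    (hnsd : Associated nu (σ nu))
    (hlm : ¬ StarAssoc σ lam mu) (hln : ¬ StarAssoc σ lam nu)
    (hmn : ¬ StarAssoc σ mu nu)
    (pi : ℕ × ℕ × ℕ × ℕ → ℤ)
    (hpi : ∀ v : ℕ × ℕ × ℕ × ℕ,
      pi v = (v.1 : ℤ) - (v.2.1 : ℤ) + (v.2.2.1 : ℤ) - (v.2.2.2 : ℤ))
    (chi : ℕ × ℕ × ℕ × ℕ → R)
    (hchi : ∀ v : ℕ × ℕ × ℕ × ℕ,
      chi v = (lam * mu) ^ (v.1 + v.2.1) * (mu * nu) ^ (v.2.2.1 + v.2.2.2)) :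
    -- (i) every `C_ζ` is trivial, so `Φ_L` is not surjective
    (∀ ζ : R, Irreducible ζ →
      ∀ v, (∃ k : ℕ, Associated (chi v) (Sdual σ ζ ^ k)) → v = (0, 0, 0, 0)) ∧
    -- (ii) `C^μ` is trivial
    (∀ v, ¬ mu ∣ chi v → v = (0, 0, 0, 0)) ∧
    -- (iii) `C^ζ = ℤ` for every irreducible `ζ` not `*`-associate to `μ`
    (∀ ζ : R, Irreducible ζ → ¬ StarAssoc σ ζ mu →
      ∀ n : ℤ, ∃ v, pi v = n ∧ ¬ ζ ∣ chi v) := by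
  have hprime : ∀ {p : R}, Irreducible p → Prime p :=
    fun h => UniqueFactorizationMonoid.irreducible_iff_prime.mp h
  have hσassoc : ∀ {a b : R}, Associated a b → Associated (σ a) (σ b) :=
    fun h => h.map σ.toMonoidHom
  -- self-dual trick: p self-dual, Associated p (σ ζ) → Associated p ζ
  have hsd : ∀ {p ζ : R}, Associated p (σ p) → Associated p (σ ζ) → Associated p ζ := by
    intro p ζ hpsd h
    have h2 : Associated (σ p) ζ := by
      have := hσassoc h
      rwa [hσ] at this
    exact hpsd.trans h2
  -- key: p irreducible self-dual, p ∣ Sdual ζ ^ k → Associated p ζ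
  have key : ∀ {p ζ : R}, Irreducible p → Associated p (σ p) → Irreducible ζ →
      ∀ k : ℕ, p ∣ Sdual σ ζ ^ k → Associated p ζ := by
    intro p ζ hp hpsd hζ k hdvd
    have hpp := hprime hp
    unfold Sdual at hdvd
    by_cases h : Associated ζ (σ ζ)
    · rw [if_pos h] at hdvd
      exact hp.associated_of_dvd hζ (hpp.dvd_of_dvd_pow hdvd)
    · rw [if_neg h, mul_pow] at hdvd
      rcases hpp.2.2 _ _ hdvd with h1 | h1
      · exact hp.associated_of_dvd hζ (hpp.dvd_of_dvd_pow h1)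
      · have h2 : p ∣ σ ζ := hpp.dvd_of_dvd_pow h1
        -- σ ζ is irreducible since σ is an automorphism
        have hζσ : Irreducible (σ ζ) := by
          constructor
          · intro hu
            exact hζ.not_isUnit (by
              have := hu.map σ
              rwa [hσ] at this)
          · intro a b hab
            have : ζ = σ a * σ b := by
              have := congrArg σ hab
              rwa [hσ, map_mul] at this
            rcases hζ.isUnit_or_isUnit this with hu | hu
            · left; have := hu.map σ; rwa [hσ] at this
            · right; have := hu.map σ; rwa [hσ] at this
        exact hsd hpsd (hp.associated_of_dvd hζσ h2)
  have notlm : ¬ Associated lam mu := fun h => hlm (Or.inl h)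
  have notln : ¬ Associated lam nu := fun h => hln (Or.inl h)
  have notmn : ¬ Associated mu nu := fun h => hmn (Or.inl h)
  refine ⟨?_, ?_, ?_⟩
  · -- (i)
    rintro ζ hζ ⟨a, b, c, d⟩ ⟨k, hassoc⟩
    rw [hchi] at hassoc
    simp only at hassoc
    have hdvd : (lam * mu) ^ (a + b) * (mu * nu) ^ (c + d) ∣ Sdual σ ζ ^ k := hassoc.dvd
    have hab : a + b = 0 := by
      by_contra h
      have hl : lam ∣ Sdual σ ζ ^ k :=
        dvd_trans (dvd_mul_of_dvd_left (dvd_pow (dvd_mul_right lam mu) h) _) hdvd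
      have hm : mu ∣ Sdual σ ζ ^ k :=
        dvd_trans (dvd_mul_of_dvd_left (dvd_pow (dvd_mul_left mu lam) h) _) hdvd
      exact notlm ((key hlirr hlsd hζ k hl).trans (key hmirr hmsd hζ k hm).symm)
    have hcd : c + d = 0 := by
      by_contra h
      have hm : mu ∣ Sdual σ ζ ^ k :=
        dvd_trans (dvd_mul_of_dvd_right (dvd_pow (dvd_mul_right mu nu) h) _) hdvd
      have hn : nu ∣ Sdual σ ζ ^ k :=
        dvd_trans (dvd_mul_of_dvd_right (dvd_pow (dvd_mul_left nu mu) h) _) hdvd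
      exact notmn ((key hmirr hmsd hζ k hm).trans (key hnirr hnsd hζ k hn).symm)
    have : a = 0 ∧ b = 0 := by omega
    have : c = 0 ∧ d = 0 := by omega
    simp_all
  · -- (ii)
    rintro ⟨a, b, c, d⟩ hnd
    rw [hchi] at hnd
    simp only at hnd
    have hab : a + b = 0 := by
      by_contra h
      exact hnd (dvd_mul_of_dvd_left (dvd_pow (dvd_mul_left mu lam) h) _)
    have hcd : c + d = 0 := by
      by_contra h
      exact hnd (dvd_mul_of_dvd_right (dvd_pow (dvd_mul_right mu nu) h) _)
    have : a = 0 ∧ b = 0 := by omega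
    have : c = 0 ∧ d = 0 := by omega
    simp_all
  · -- (iii)
    intro ζ hζ hζm n
    have hζp := hprime hζ
    have notζm : ¬ Associated ζ mu := fun h => hζm (Or.inl h)
    by_cases hζl : Associated ζ lam
    · -- use the (μν) part
      refine ⟨(0, 0, n.toNat, (-n).toNat), ?_, ?_⟩
      · rw [hpi]; simp
      · rw [hchi]
        simp only [Nat.add_zero, Nat.zero_add, pow_zero, one_mul]
        intro hd
        have h1 : ζ ∣ mu * nu := hζp.dvd_of_dvd_pow hd
        rcases hζp.2.2 _ _ h1 with h2 | h2
        · exact notζm (hζ.associated_of_dvd hmirr h2)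
        · exact notln (hζl.symm.trans (hζ.associated_of_dvd hnirr h2))
    · -- use the (λμ) part
      refine ⟨(n.toNat, (-n).toNat, 0, 0), ?_, ?_⟩
      · rw [hpi]; simp
      · rw [hchi]
        simp only [Nat.add_zero, Nat.zero_add, pow_zero, mul_one]
        intro hd
        have h1 : ζ ∣ lam * mu := hζp.dvd_of_dvd_pow hd
        rcases hζp.2.2 _ _ h1 with h2 | h2
        · exact hζl (hζ.associated_of_dvd hlirr h2)
        · exact notζm (hζ.associated_of_dvd hmirr h2)
end

section
/- Let m ≥ 1 be an integer, let a be a nonzero integer, and let r be a prime number such that r ≥ q for every prime q dividing a. Then gcd(a, (m+1)^r − m^r) = 1. -/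
/-- If `r` is a prime not smaller than any prime factor of the nonzero integer `a`,
then `a` and `(m+1)^r - m^r` are relatively prime. -/
theorem statement13 (m : ℤ) (hm : 1 ≤ m) (a : ℤ) (ha : a ≠ 0) (r : ℕ)
    (hr : Nat.Prime r)
    (hge : ∀ q : ℕ, Nat.Prime q → (q : ℤ) ∣ a → q ≤ r) :
    Int.gcd a ((m + 1) ^ r - m ^ r) = 1 := by
  by_contra hg
  obtain ⟨p, hp, hpg⟩ := Nat.exists_prime_and_dvd hg
  haveI : Fact p.Prime := ⟨hp⟩
  have hpa : (p : ℤ) ∣ a :=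
    dvd_trans (Int.natCast_dvd_natCast.mpr hpg) (Int.gcd_dvd_left _ _)
  have hpN : (p : ℤ) ∣ ((m + 1) ^ r - m ^ r) :=
    dvd_trans (Int.natCast_dvd_natCast.mpr hpg) (Int.gcd_dvd_right _ _)
  have hple : p ≤ r := hge p hp hpa
  have hcast : (((m + 1) ^ r - m ^ r : ℤ) : ZMod p) = 0 :=
    (ZMod.intCast_zmod_eq_zero_iff_dvd _ _).mpr hpN
  push_cast at hcast
  set x : ZMod p := ((m : ℤ) : ZMod p) with hx
  have hkey : (x + 1) ^ r = x ^ r := sub_eq_zero.mp hcast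
  have hx0 : x ≠ 0 := by
    intro h
    rw [h] at hkey
    simp [zero_pow hr.ne_zero] at hkey
  have hx1 : x + 1 ≠ 0 := by
    intro h
    rw [h] at hkey
    have : x ^ r = 0 := by rw [← hkey, zero_pow hr.ne_zero]
    exact hx0 (pow_eq_zero_iff hr.ne_zero |>.mp this)
  -- u = (x+1)/x has u^r = 1
  set u : ZMod p := (x + 1) * x⁻¹ with hu
  have hur : u ^ r = 1 := by
    rw [hu, mul_pow, hkey, ← mul_pow, mul_inv_cancel₀ hx0, one_pow]
  have hord : orderOf u ∣ r := orderOf_dvd_of_pow_eq_one hur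
  rcases (Nat.Prime.eq_one_or_self_of_dvd hr _ hord) with h1 | hrr
  · -- order 1 : u = 1 gives x + 1 = x
    have hu1 : u = 1 := orderOf_eq_one_iff.mp h1
    have : x + 1 = x := by
      have := congrArg (· * x) hu1
      simpa [hu, mul_assoc, inv_mul_cancel₀ hx0] using this
    simpa using this
  · -- order r divides p - 1
    have hu0 : u ≠ 0 := mul_ne_zero hx1 (inv_ne_zero hx0)
    have hfl : u ^ (p - 1) = 1 := ZMod.pow_card_sub_one_eq_one hu0
    have hdvd : r ∣ p - 1 := hrr ▸ orderOf_dvd_of_pow_eq_one hfl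
    have hp1 : 0 < p - 1 := Nat.sub_pos_of_lt hp.one_lt
    have : r ≤ p - 1 := Nat.le_of_dvd hp1 hdvd
    omega
end

section
/- Let m ≥ 1 and r ≥ 1 be integers. The quotient ring ℤ[t]/I, where I is the ideal of the polynomial ring ℤ[t] generated by (m+1)·t − m and t^r − 1, is isomorphic as a ring (in particular, as an abelian group it is cyclic) to ℤ/((m+1)^r − m^r). -/
open Polynomial in
/-- The quotient of `ℤ[t]` by the ideal generated by `(m+1)·t - m` and `t^r - 1`
is isomorphic as a ring to `ℤ/((m+1)^r - m^r)`. -/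
theorem statement14 (m r : ℕ) (hm : 1 ≤ m) (hr : 1 ≤ r) :
    Nonempty
      ((Polynomial ℤ ⧸ Ideal.span
          ({C ((m : ℤ) + 1) * X - C (m : ℤ), X ^ r - 1} : Set (Polynomial ℤ)))
        ≃+* ZMod ((m + 1) ^ r - m ^ r)) := by
  set N : ℕ := (m + 1) ^ r - m ^ r with hN
  set g₁ : ℤ[X] := C ((m : ℤ) + 1) * X - C (m : ℤ) with hg₁
  set g₂ : ℤ[X] := X ^ r - 1 with hg₂
  set I : Ideal ℤ[X] := Ideal.span {g₁, g₂} with hI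
  have hle : m ^ r ≤ (m + 1) ^ r := Nat.pow_le_pow_left (by omega) r
  have hNcast : (N : ℤ) = ((m : ℤ) + 1) ^ r - (m : ℤ) ^ r := by
    rw [hN]; push_cast [hle]; ring
  have hg₁I : g₁ ∈ I := Ideal.subset_span (by simp)
  have hg₂I : g₂ ∈ I := Ideal.subset_span (by simp)
  -- C N ∈ I
  have hNI : C (N : ℤ) ∈ I := by
    obtain ⟨s, hs⟩ := sub_dvd_pow_sub_pow (C ((m : ℤ) + 1) * X) (C (m : ℤ)) r
    rw [hI, Ideal.mem_span_pair]
    refine ⟨s, -C (((m : ℤ) + 1) ^ r), ?_⟩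
    rw [hNcast, map_sub, map_pow, map_pow]
    rw [hg₁, hg₂]
    linear_combination -hs
  -- Bezout
  have hcop : IsCoprime ((m : ℤ) + 1) (N : ℤ) := by
    rw [hNcast]
    have h0 : IsCoprime ((m : ℤ) + 1) (-(m : ℤ) ^ r) :=
      (IsCoprime.pow_right ⟨1, -1, by ring⟩).neg_right
    have := h0.add_mul_left_right (((m : ℤ) + 1) ^ (r - 1))
    have hpow : ((m : ℤ) + 1) ^ r = ((m : ℤ) + 1) * ((m : ℤ) + 1) ^ (r - 1) := by
      conv_lhs => rw [show r = (r - 1) + 1 by omega]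
      ring
    rw [hpow]; convert this using 1; rfl; ring
  obtain ⟨u, v, huv⟩ := hcop
  -- facts in ZMod N
  have hNz : ((N : ℤ) : ZMod N) = 0 := by push_cast; exact ZMod.natCast_self N
  have hu1 : ((u : ZMod N)) * ((m : ZMod N) + 1) = 1 := by
    have h := congrArg (Int.cast : ℤ → ZMod N) huv
    push_cast at h ⊢
    rw [ZMod.natCast_self] at h
    linear_combination h
  have hmr : ((m : ZMod N) + 1) ^ r = (m : ZMod N) ^ r := by
    have h := congrArg (Int.cast : ℤ → ZMod N) hNcast
    rw [hNz] at h
    push_cast at h ⊢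
    linear_combination -h
  -- forward map
  set a : ZMod N := (((m : ℤ) * u : ℤ) : ZMod N) with ha
  set φ : ℤ[X] →+* ZMod N := eval₂RingHom (Int.castRingHom (ZMod N)) a with hφ
  have hφC : ∀ z : ℤ, φ (C z) = (z : ZMod N) := fun z => by simp [hφ]
  have hφX : φ X = a := by simp [hφ]
  have hφg₁ : φ g₁ = 0 := by
    rw [hg₁, map_sub, map_mul, hφC, hφC, hφX, ha]
    push_cast
    linear_combination (m : ZMod N) * hu1
  have hφg₂ : φ g₂ = 0 := by
    rw [hg₂, map_sub, map_pow, map_one, hφX, ha]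
    push_cast
    rw [mul_pow, ← hmr, ← mul_pow, mul_comm ((m : ZMod N) + 1), hu1, one_pow, sub_self]
  have hker : ∀ p ∈ I, φ p = 0 := by
    intro p hp
    have hle' : I ≤ RingHom.ker φ := by
      rw [hI, Ideal.span_le]
      rintro x hx
      simp only [Set.mem_insert_iff, Set.mem_singleton_iff] at hx
      rcases hx with rfl | rfl
      · exact hφg₁
      · exact hφg₂
    exact hle' hp
  set φ' : (ℤ[X] ⧸ I) →+* ZMod N := Ideal.Quotient.lift I φ hker with hφ'
  -- backward map
  have hNR : ((N : ℤ) : ℤ[X] ⧸ I) = 0 := by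
    rw [← map_intCast (Ideal.Quotient.mk I), Ideal.Quotient.eq_zero_iff_mem]
    have : ((N : ℤ) : ℤ[X]) = C (N : ℤ) := (Polynomial.C_eq_intCast _).symm
    rw [this]; exact hNI
  have hkerψ : ∀ z ∈ Ideal.span {(N : ℤ)}, (Int.castRingHom (ℤ[X] ⧸ I)) z = 0 := by
    intro z hz
    rw [Ideal.mem_span_singleton] at hz
    obtain ⟨c, rfl⟩ := hz
    simp only [eq_intCast, Int.cast_mul, hNR, zero_mul]
  set ψ : ZMod N →+* (ℤ[X] ⧸ I) :=
    (Ideal.Quotient.lift (Ideal.span {(N : ℤ)}) (Int.castRingHom (ℤ[X] ⧸ I)) hkerψ).comp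
      (Int.quotientSpanNatEquivZMod N).symm.toRingHom with hψ
  have hψint : ∀ z : ℤ, ψ ((z : ZMod N)) = (z : ℤ[X] ⧸ I) := by
    intro z
    have h2 : ((z : ZMod N)) = (Int.quotientSpanNatEquivZMod N) (Ideal.Quotient.mk _ z) := by
      simp [Int.quotientSpanNatEquivZMod]
    rw [hψ, h2]
    simp
  -- X = m*u in the quotient
  have hXmu : (((m : ℤ) * u : ℤ) : ℤ[X] ⧸ I) = Ideal.Quotient.mk I X := by
    rw [← map_intCast (Ideal.Quotient.mk I)]
    refine (Ideal.Quotient.eq).mpr ?_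
    have hc : (((m : ℤ) * u : ℤ) : ℤ[X]) = C ((m : ℤ) * u) := (Polynomial.C_eq_intCast _).symm
    rw [hc]
    have key : (C ((m : ℤ) * u) : ℤ[X]) - X = (-C u) * g₁ + (-C v * X) * C (N : ℤ) := by
      have hC := congrArg (C : ℤ → ℤ[X]) huv
      simp only [map_add, map_mul, map_one] at hC
      rw [hg₁]
      simp only [map_add, map_mul, map_one]
      linear_combination X * hC
    rw [key]
    exact Ideal.add_mem _ (Ideal.mul_mem_left _ _ hg₁I) (Ideal.mul_mem_left _ _ hNI)
  -- the two composites
  have comp1 : φ'.comp ψ = RingHom.id (ZMod N) := RingHom.ext_zmod _ _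
  have comp2 : ψ.comp φ' = RingHom.id (ℤ[X] ⧸ I) := by
    apply Ideal.Quotient.ringHom_ext
    apply Polynomial.ringHom_ext
    · intro z
      simp only [RingHom.comp_apply, hφ', Ideal.Quotient.lift_mk, hφC, RingHom.id_apply]
      have hcz : (C z : ℤ[X]) = (z : ℤ[X]) := by simp
      rw [hψint, hcz, map_intCast]
    · simp only [RingHom.comp_apply, hφ', Ideal.Quotient.lift_mk, hφX, RingHom.id_apply, ha]
      rw [hψint, hXmu]
  exact ⟨RingEquiv.ofRingHom φ' ψ comp1 comp2⟩
end

section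
/- For every odd integer m ≥ 23 and every integer i ≥ 0, one has 1 + 2i + ⌊(−2mi + 1)/(2m+1)⌋ + ⌊−i/2⌋ + ⌊(−i + 1)/3⌋ + ⌊(−i + (m−3)/2)/(m+1)⌋ ≥ 0. -/
/-- For every odd integer `m ≥ 23` and every integer `i ≥ 0`,
`1 + 2i + ⌊(-2mi+1)/(2m+1)⌋ + ⌊-i/2⌋ + ⌊(-i+1)/3⌋ + ⌊(-i+(m-3)/2)/(m+1)⌋ ≥ 0`
(the increments `Δ_i` for the class `k₁` are nonnegative). -/
theorem statement16 (m i : ℤ) (hm : 23 ≤ m) (hmo : Odd m) (hi : 0 ≤ i) :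
    0 ≤ 1 + 2 * i
      + ⌊((-2 * (m : ℚ) * (i : ℚ) + 1) / (2 * (m : ℚ) + 1))⌋
      + ⌊(-(i : ℚ) / 2)⌋
      + ⌊((-(i : ℚ) + 1) / 3)⌋
      + ⌊((-(i : ℚ) + ((m : ℚ) - 3) / 2) / ((m : ℚ) + 1))⌋ := by
  have hmq : (23 : ℚ) ≤ (m : ℚ) := by exact_mod_cast hm
  have hiq : (0 : ℚ) ≤ (i : ℚ) := by exact_mod_cast hi
  have hA : (0 : ℚ) < 2 * (m : ℚ) + 1 := by linarith
  have hB : (0 : ℚ) < (m : ℚ) + 1 := by linarith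
  set f2 : ℤ := ⌊(-(i : ℚ) / 2)⌋ with hf2
  set f3 : ℤ := ⌊((-(i : ℚ) + 1) / 3)⌋ with hf3
  have h2 : -(i : ℚ) / 2 - 1 < (f2 : ℚ) := Int.sub_one_lt_floor _
  have h3 : (-(i : ℚ) + 1) / 3 - 1 < (f3 : ℚ) := Int.sub_one_lt_floor _
  rcases le_or_gt i 10 with hc | hc
  · -- small i : first floor is -i, last floor is 0
    have hiq10 : (i : ℚ) ≤ 10 := by exact_mod_cast hc
    have e1 : ⌊((-2 * (m : ℚ) * (i : ℚ) + 1) / (2 * (m : ℚ) + 1))⌋ = -i := by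
      rw [Int.floor_eq_iff]
      constructor
      · rw [le_div_iff₀ hA]
        push_cast
        nlinarith
      · rw [div_lt_iff₀ hA]
        push_cast
        nlinarith
    have e4 : ⌊((-(i : ℚ) + ((m : ℚ) - 3) / 2) / ((m : ℚ) + 1))⌋ = 0 := by
      rw [Int.floor_eq_iff]
      constructor
      · rw [le_div_iff₀ hB]
        push_cast
        linarith
      · rw [div_lt_iff₀ hB]
        push_cast
        linarith
    rw [e1, e4]
    have key : (-1 : ℚ) < ((1 + 2 * i + -i + f2 + f3 + 0 : ℤ) : ℚ) := by
      push_cast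
      linarith
    have : (-1 : ℤ) < 1 + 2 * i + -i + f2 + f3 + 0 := by exact_mod_cast key
    linarith
  · -- large i : crude bounds on all floors
    have hiq11 : (11 : ℚ) ≤ (i : ℚ) := by exact_mod_cast hc
    set f1 : ℤ := ⌊((-2 * (m : ℚ) * (i : ℚ) + 1) / (2 * (m : ℚ) + 1))⌋ with hf1
    set f4 : ℤ := ⌊((-(i : ℚ) + ((m : ℚ) - 3) / 2) / ((m : ℚ) + 1))⌋ with hf4
    have h1 : (-2 * (m : ℚ) * (i : ℚ) + 1) / (2 * (m : ℚ) + 1) - 1 < (f1 : ℚ) :=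
      Int.sub_one_lt_floor _
    have h4 : (-(i : ℚ) + ((m : ℚ) - 3) / 2) / ((m : ℚ) + 1) - 1 < (f4 : ℚ) :=
      Int.sub_one_lt_floor _
    have h1' : -2 * (m : ℚ) * (i : ℚ) + 1 - (2 * (m : ℚ) + 1) < (f1 : ℚ) * (2 * (m : ℚ) + 1) := by
      have := (div_lt_iff₀ hA).mp (by linarith : (-2 * (m : ℚ) * (i : ℚ) + 1) / (2 * (m : ℚ) + 1) < (f1 : ℚ) + 1)
      linarith
    have h4' : -(i : ℚ) + ((m : ℚ) - 3) / 2 - ((m : ℚ) + 1) < (f4 : ℚ) * ((m : ℚ) + 1) := by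
      have := (div_lt_iff₀ hB).mp (by linarith : (-(i : ℚ) + ((m : ℚ) - 3) / 2) / ((m : ℚ) + 1) < (f4 : ℚ) + 1)
      linarith
    have key : (-1 : ℚ) < ((1 + 2 * i + f1 + f2 + f3 + f4 : ℤ) : ℚ) := by
      push_cast
      nlinarith [mul_pos hA hB, mul_le_mul_of_nonneg_left hiq11 (le_of_lt hA),
        mul_le_mul_of_nonneg_left hiq11 (le_of_lt hB),
        mul_nonneg (sub_nonneg.mpr hmq) (by linarith : (0:ℚ) ≤ (i:ℚ) - 11)]
    have : (-1 : ℤ) < 1 + 2 * i + f1 + f2 + f3 + f4 := by exact_mod_cast key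
    linarith
end

section
/- For every odd integer m ≥ 23 and every integer i ≥ 0, one has 1 + 2i + ⌊(−2mi + 1)/(2m+1)⌋ + ⌊−i/2⌋ + ⌊−i/3⌋ + ⌊(−i + m − 2)/(m+1)⌋ ≥ 0. -/
/-- For every odd integer `m ≥ 23` and every integer `i ≥ 0`,
`1 + 2i + ⌊(-2mi+1)/(2m+1)⌋ + ⌊-i/2⌋ + ⌊-i/3⌋ + ⌊(-i+m-2)/(m+1)⌋ ≥ 0`
(the increments `Δ_i` for the class `k₂` are nonnegative). -/
theorem statement17 (m i : ℤ) (hm : 23 ≤ m) (hmo : Odd m) (hi : 0 ≤ i) :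
    0 ≤ 1 + 2 * i
      + ⌊((-2 * (m : ℚ) * (i : ℚ) + 1) / (2 * (m : ℚ) + 1))⌋
      + ⌊(-(i : ℚ) / 2)⌋
      + ⌊(-(i : ℚ) / 3)⌋
      + ⌊((-(i : ℚ) + (m : ℚ) - 2) / ((m : ℚ) + 1))⌋ := by
  have hq : (23:ℚ) ≤ (m:ℚ) := by exact_mod_cast hm
  have hq1 : (0:ℚ) < 2*(m:ℚ)+1 := by linarith
  have hq2 : (0:ℚ) < (m:ℚ)+1 := by linarith
  have flo : ∀ (x : ℚ) (n : ℤ), (n:ℚ) ≤ x → x < (n:ℚ)+1 → ⌊x⌋ = n := by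
    intro x n h1 h2
    rw [Int.floor_eq_iff]
    exact ⟨h1, by exact_mod_cast h2⟩
  rcases lt_trichotomy i 1 with h | h | h
  · -- i = 0
    have hz : i = 0 := by omega
    subst hz
    have e1 : ⌊((-2 * (m : ℚ) * ((0:ℤ) : ℚ) + 1) / (2 * (m : ℚ) + 1))⌋ = 0 := by
      apply flo
      · rw [le_div_iff₀ hq1]; push_cast; linarith
      · rw [div_lt_iff₀ hq1]; push_cast; linarith
    have e2 : ⌊(-(((0:ℤ):ℚ)) / 2)⌋ = 0 := by apply flo <;> push_cast <;> norm_num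
    have e3 : ⌊(-(((0:ℤ):ℚ)) / 3)⌋ = 0 := by apply flo <;> push_cast <;> norm_num
    have e4 : ⌊((-(((0:ℤ):ℚ)) + (m : ℚ) - 2) / ((m : ℚ) + 1))⌋ = 0 := by
      apply flo
      · rw [le_div_iff₀ hq2]; push_cast; linarith
      · rw [div_lt_iff₀ hq2]; push_cast; linarith
    rw [e1, e2, e3, e4]; norm_num
  · -- i = 1
    subst h
    have e1 : ⌊((-2 * (m : ℚ) * ((1:ℤ) : ℚ) + 1) / (2 * (m : ℚ) + 1))⌋ = -1 := by
      apply flo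
      · rw [le_div_iff₀ hq1]; push_cast; linarith
      · rw [div_lt_iff₀ hq1]; push_cast; linarith
    have e2 : ⌊(-(((1:ℤ):ℚ)) / 2)⌋ = -1 := by apply flo <;> push_cast <;> norm_num
    have e3 : ⌊(-(((1:ℤ):ℚ)) / 3)⌋ = -1 := by apply flo <;> push_cast <;> norm_num
    have e4 : ⌊((-(((1:ℤ):ℚ)) + (m : ℚ) - 2) / ((m : ℚ) + 1))⌋ = 0 := by
      apply flo
      · rw [le_div_iff₀ hq2]; push_cast; linarith
      · rw [div_lt_iff₀ hq2]; push_cast; linarith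
    rw [e1, e2, e3, e4]; norm_num
  · -- i ≥ 2
    have hj : (2:ℚ) ≤ (i:ℚ) := by exact_mod_cast h
    have F1 : (-i : ℤ) ≤ ⌊((-2 * (m : ℚ) * (i : ℚ) + 1) / (2 * (m : ℚ) + 1))⌋ := by
      rw [Int.le_floor, le_div_iff₀ hq1]
      push_cast
      nlinarith
    have F2 := Int.sub_one_lt_floor (-(i:ℚ)/2)
    have F3 := Int.sub_one_lt_floor (-(i:ℚ)/3)
    have F4 := Int.sub_one_lt_floor ((-(i:ℚ) + (m:ℚ) - 2) / ((m:ℚ)+1))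
    have key : (-1:ℚ) < 1 + 2 * (i:ℚ)
        + (⌊((-2 * (m : ℚ) * (i : ℚ) + 1) / (2 * (m : ℚ) + 1))⌋:ℚ)
        + (⌊(-(i : ℚ) / 2)⌋:ℚ) + (⌊(-(i : ℚ) / 3)⌋:ℚ)
        + (⌊((-(i : ℚ) + (m : ℚ) - 2) / ((m : ℚ) + 1))⌋:ℚ) := by
      have hF1 : (-(i:ℚ)) ≤ (⌊((-2 * (m : ℚ) * (i : ℚ) + 1) / (2 * (m : ℚ) + 1))⌋:ℚ) := by
        exact_mod_cast F1
      have hd : ((-(i:ℚ) + (m:ℚ) - 2) / ((m:ℚ)+1)) * ((m:ℚ)+1) = -(i:ℚ) + (m:ℚ) - 2 := by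
        field_simp
      nlinarith [mul_le_mul_of_nonneg_right hj (by linarith : (0:ℚ) ≤ (m:ℚ) - 5)]
    have : (-1:ℤ) < 1 + 2 * i
      + ⌊((-2 * (m : ℚ) * (i : ℚ) + 1) / (2 * (m : ℚ) + 1))⌋
      + ⌊(-(i : ℚ) / 2)⌋
      + ⌊(-(i : ℚ) / 3)⌋
      + ⌊((-(i : ℚ) + (m : ℚ) - 2) / ((m : ℚ) + 1))⌋ := by exact_mod_cast key
    omega
end
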